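/- arXiv:1602.06940 — 3 statements merged into one kernel-verified Lean document; each statement's English description precedes it below -/
import Mathlib

section
/- In the two-agent manipulation setting, suppose ≻₁' is a report under which agent 1's allocation is exactly S (so |S| equals the number of occurrences of agent 1 in π). Then for every report ≻₁'' that orders the items of S in the same relative order as ≻₁' and ranks every item of O∖S below every item of S, running sequential allocation on (≻₁'', ≻₂) still gives agent 1 the allocation S and agent 2 the allocation O∖S. -/
/-- Sequential allocation: process the picking sequence in order; at each step the
agent whose turn it is receives his most-preferred (earliest in his ranking list)
item among those not yet allocated. Returns each agent's allocation. -/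
def seqAlloc {A I : Type*} [DecidableEq A] [DecidableEq I]
    (prefs : A → List I) : List A → Finset I → A → Finset I
  | [], _ => fun _ => ∅
  | a :: rest, rem =>
    match (prefs a).find? (fun o => decide (o ∈ rem)) with
    | none => seqAlloc prefs rest rem
    | some o => fun j =>
        if j = a then insert o (seqAlloc prefs rest (rem.erase o) j)
        else seqAlloc prefs rest (rem.erase o) j

/-- A report (strict linear order) over the item set `O`, given as a ranking list:
most preferred item first. -/
def IsReport {I : Type*} [DecidableEq I] (O : Finset I) (p : List I) : Prop :=
  p.Nodup ∧ ∀ o, o ∈ p ↔ o ∈ O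

/-- Two-agent sequential allocation: agent `0` ("agent 1") reports `p1`,
agent `1` ("agent 2") reports `p2`. -/
def alloc2 {I : Type*} [DecidableEq I] (p1 p2 : List I)
    (π : List (Fin 2)) (O : Finset I) : Fin 2 → Finset I :=
  seqAlloc (fun a => if a = 0 then p1 else p2) π O

/-- `S` is achievable by agent 1: some report gives agent 1 an allocation including `S`. -/
def Achievable {I : Type*} [DecidableEq I] (p2 : List I) (π : List (Fin 2))
    (O : Finset I) (S : Finset I) : Prop :=
  ∃ p1, IsReport O p1 ∧ S ⊆ alloc2 p1 p2 π O 0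

/-- `o` is strictly preferred to `o'` in the ranking list `p`. -/
def Prefers {I : Type*} [DecidableEq I] (p : List I) (o o' : I) : Prop :=
  p.idxOf o < p.idxOf o'

instance {I : Type*} [DecidableEq I] (p : List I) (o o' : I) : Decidable (Prefers p o o') :=
  inferInstanceAs (Decidable (_ < _))

/-- `u` is an additive utility consistent with the ranking `p` on item set `O`. -/
def Consistent {I : Type*} [DecidableEq I] (O : Finset I) (p : List I) (u : I → ℝ) : Prop :=
  (∀ o ∈ O, 0 < u o) ∧ ∀ o ∈ O, ∀ o' ∈ O, u o' < u o ↔ Prefers p o o'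

lemma seqAlloc_subset {A I : Type*} [DecidableEq A] [DecidableEq I] (prefs : A → List I) :
    ∀ (π : List A) (rem : Finset I) (j : A), seqAlloc prefs π rem j ⊆ rem := by
  intro π
  induction π with
  | nil => intro rem j; simp [seqAlloc]
  | cons a rest ih =>
    intro rem j
    simp only [seqAlloc]
    cases h : (prefs a).find? (fun o => decide (o ∈ rem)) with
    | none => exact ih rem j
    | some o =>
      have ho : o ∈ rem := by simpa using List.find?_some h
      by_cases hj : j = a
      · simp only [hj, if_pos rfl]
        intro x hx
        rcases Finset.mem_insert.1 hx with rfl | hx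
        · exact ho
        · exact Finset.erase_subset _ _ (ih _ _ hx)
      · simp only [if_neg hj]
        exact (ih _ _).trans (Finset.erase_subset _ _)

lemma seqAlloc_one {I : Type*} [DecidableEq I] (O : Finset I) (prefs : Fin 2 → List I)
    (hcov : ∀ a, ∀ o ∈ O, o ∈ prefs a) :
    ∀ (π : List (Fin 2)) (rem : Finset I), rem ⊆ O → π.length = rem.card →
      seqAlloc prefs π rem 1 = rem \ seqAlloc prefs π rem 0 := by
  intro π
  induction π with
  | nil =>
    intro rem hsub hlen
    have : rem = ∅ := Finset.card_eq_zero.1 hlen.symm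
    simp [seqAlloc, this]
  | cons a rest ih =>
    intro rem hsub hlen
    have hne : rem.Nonempty := by
      rw [← Finset.card_pos, ← hlen]; simp
    obtain ⟨x, hx⟩ := hne
    have hsome : ((prefs a).find? (fun o => decide (o ∈ rem))).isSome := by
      rw [List.find?_isSome]
      exact ⟨x, hcov a x (hsub hx), by simpa using hx⟩
    obtain ⟨o, h⟩ := Option.isSome_iff_exists.1 hsome
    have ho : o ∈ rem := by simpa using List.find?_some h
    have hsub' : rem.erase o ⊆ O := (Finset.erase_subset _ _).trans hsub
    have hlen' : rest.length = (rem.erase o).card := by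
      rw [Finset.card_erase_of_mem ho, ← hlen]; simp
    have IH := ih (rem.erase o) hsub' hlen'
    simp only [seqAlloc, h]
    have ha : a = 0 ∨ a = 1 := by omega
    rcases ha with rfl | rfl
    · rw [if_neg (show ¬(1:Fin 2) = 0 by decide), if_pos rfl, IH]
      ext y
      simp only [Finset.mem_sdiff, Finset.mem_erase, Finset.mem_insert]
      constructor
      · rintro ⟨⟨hy1, hy2⟩, hy3⟩; exact ⟨hy2, fun h' => h'.elim (fun e => hy1 e) hy3⟩
      · rintro ⟨hy1, hy2⟩
        exact ⟨⟨fun e => hy2 (Or.inl e), hy1⟩, fun h' => hy2 (Or.inr h')⟩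
    · rw [if_pos rfl, if_neg (show ¬(0:Fin 2) = 1 by decide), IH]
      have hoX : o ∉ seqAlloc prefs rest (rem.erase o) 0 := fun hmem =>
        (Finset.notMem_erase o rem) (seqAlloc_subset prefs rest (rem.erase o) 0 hmem)
      ext y
      simp only [Finset.mem_insert, Finset.mem_sdiff, Finset.mem_erase]
      constructor
      · rintro (rfl | ⟨⟨hy1, hy2⟩, hy3⟩)
        · exact ⟨ho, hoX⟩
        · exact ⟨hy2, hy3⟩
      · rintro ⟨hy1, hy2⟩
        by_cases hyo : y = o
        · exact Or.inl hyo
        · exact Or.inr ⟨⟨hyo, hy1⟩, hy2⟩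

lemma find?_and {α : Type*} (q p : α → Bool) :
    ∀ (l : List α) (o : α), l.find? p = some o → q o = true →
      (l.filter q).find? p = some o := by
  intro l
  induction l with
  | nil => intro o h; simp at h
  | cons a tl ih =>
    intro o h hq
    by_cases hpa : p a = true
    · rw [List.find?_cons_of_pos hpa] at h
      obtain rfl : a = o := by injection h
      rw [List.filter_cons_of_pos (by exact hq), List.find?_cons_of_pos hpa]
    · rw [List.find?_cons_of_neg (by simpa using hpa)] at h
      by_cases hqa : q a = true
      · rw [List.filter_cons_of_pos (by exact hqa),
          List.find?_cons_of_neg (by simpa using hpa)]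
        exact ih o h hq
      · rw [List.filter_cons_of_neg (by simpa using hqa)]
        exact ih o h hq

lemma seqAlloc_cons_zero {I : Type*} [DecidableEq I] (p1 p2 : List I)
    (rest : List (Fin 2)) (rem : Finset I) :
    seqAlloc (fun a : Fin 2 => if a = 0 then p1 else p2) ((0:Fin 2) :: rest) rem
      = match p1.find? (fun o => decide (o ∈ rem)) with
        | none => seqAlloc (fun a : Fin 2 => if a = 0 then p1 else p2) rest rem
        | some o => fun j =>
            if j = 0 then
              insert o (seqAlloc (fun a : Fin 2 => if a = 0 then p1 else p2) rest (rem.erase o) j)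
            else seqAlloc (fun a : Fin 2 => if a = 0 then p1 else p2) rest (rem.erase o) j := rfl

lemma seqAlloc_cons_one {I : Type*} [DecidableEq I] (p1 p2 : List I)
    (rest : List (Fin 2)) (rem : Finset I) :
    seqAlloc (fun a : Fin 2 => if a = 0 then p1 else p2) ((1:Fin 2) :: rest) rem
      = match p2.find? (fun o => decide (o ∈ rem)) with
        | none => seqAlloc (fun a : Fin 2 => if a = 0 then p1 else p2) rest rem
        | some o => fun j =>
            if j = 1 then
              insert o (seqAlloc (fun a : Fin 2 => if a = 0 then p1 else p2) rest (rem.erase o) j)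
            else seqAlloc (fun a : Fin 2 => if a = 0 then p1 else p2) rest (rem.erase o) j := rfl

lemma seqAlloc_main {I : Type*} [DecidableEq I] (O S : Finset I) (p1' p1'' p2 : List I)
    (hp1' : IsReport O p1')
    (horder : p1''.filter (fun o => decide (o ∈ S)) = p1'.filter (fun o => decide (o ∈ S)))
    (hbelow : p1'' = p1''.filter (fun o => decide (o ∈ S))
        ++ p1''.filter (fun o => decide (o ∉ S))) :
    ∀ (π : List (Fin 2)) (rem T : Finset I), rem ⊆ O →
      seqAlloc (fun a => if a = 0 then p1' else p2) π rem 0 = T → T ⊆ S →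
      seqAlloc (fun a : Fin 2 => if a = 0 then p1'' else p2) π rem
        = seqAlloc (fun a => if a = 0 then p1' else p2) π rem := by
  intro π
  induction π with
  | nil => intro rem T _ _ _; rfl
  | cons a rest ih =>
    intro rem T hsub hT hTS
    have ha : a = 0 ∨ a = 1 := by omega
    rcases ha with rfl | rfl
    · -- agent 1's turn
      rw [seqAlloc_cons_zero] at hT ⊢
      rw [seqAlloc_cons_zero]
      cases h : p1'.find? (fun o => decide (o ∈ rem)) with
      | none =>
        rw [h] at hT
        have hrem : ∀ x, x ∉ rem := by
          intro x hx
          exact (List.find?_eq_none.1 h x ((hp1'.2 x).2 (hsub hx))) (by simpa using hx)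
        have h'' : p1''.find? (fun o => decide (o ∈ rem)) = none :=
          List.find?_eq_none.2 (fun x _ => by simpa using hrem x)
        rw [h'']
        exact ih rem T hsub hT hTS
      | some o =>
        rw [h] at hT
        have hT1 : insert o (seqAlloc (fun a : Fin 2 => if a = 0 then p1' else p2)
            rest (rem.erase o) 0) = T := hT
        have ho : o ∈ rem := by simpa using List.find?_some h
        have hoT : o ∈ T := by rw [← hT1]; simp
        have hoS : o ∈ S := hTS hoT
        have hF : (p1'.filter (fun o => decide (o ∈ S))).find?
            (fun o => decide (o ∈ rem)) = some o :=
          find?_and _ _ p1' o h (by simpa using hoS)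
        have h'' : p1''.find? (fun o => decide (o ∈ rem)) = some o := by
          conv_lhs => rw [hbelow]
          rw [List.find?_append, horder, hF]
          rfl
        have hX : o ∉ seqAlloc (fun a : Fin 2 => if a = 0 then p1' else p2)
            rest (rem.erase o) 0 := fun hmem =>
          (Finset.notMem_erase o rem) (seqAlloc_subset _ rest (rem.erase o) 0 hmem)
        have hT' : seqAlloc (fun a : Fin 2 => if a = 0 then p1' else p2)
            rest (rem.erase o) 0 = T.erase o := by
          rw [← hT1, Finset.erase_insert hX]
        have IH := ih (rem.erase o) (T.erase o)
          ((Finset.erase_subset _ _).trans hsub) hT'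
          ((Finset.erase_subset _ _).trans hTS)
        rw [h'']
        show (fun j => if j = 0 then
            insert o (seqAlloc (fun a : Fin 2 => if a = 0 then p1'' else p2) rest (rem.erase o) j)
            else seqAlloc (fun a : Fin 2 => if a = 0 then p1'' else p2) rest (rem.erase o) j)
          = (fun j => if j = 0 then
            insert o (seqAlloc (fun a : Fin 2 => if a = 0 then p1' else p2) rest (rem.erase o) j)
            else seqAlloc (fun a : Fin 2 => if a = 0 then p1' else p2) rest (rem.erase o) j)
        rw [IH]
    · -- agent 2's turn
      rw [seqAlloc_cons_one] at hT ⊢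
      rw [seqAlloc_cons_one]
      cases h : p2.find? (fun o => decide (o ∈ rem)) with
      | none =>
        rw [h] at hT
        exact ih rem T hsub hT hTS
      | some o =>
        rw [h] at hT
        have hT1 : seqAlloc (fun a : Fin 2 => if a = 0 then p1' else p2)
            rest (rem.erase o) 0 = T := hT
        have IH := ih (rem.erase o) T ((Finset.erase_subset _ _).trans hsub) hT1 hTS
        show (fun j => if j = 1 then
            insert o (seqAlloc (fun a : Fin 2 => if a = 0 then p1'' else p2) rest (rem.erase o) j)
            else seqAlloc (fun a : Fin 2 => if a = 0 then p1'' else p2) rest (rem.erase o) j)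
          = (fun j => if j = 1 then
            insert o (seqAlloc (fun a : Fin 2 => if a = 0 then p1' else p2) rest (rem.erase o) j)
            else seqAlloc (fun a : Fin 2 => if a = 0 then p1' else p2) rest (rem.erase o) j)
        rw [IH]

/-- If report `p1'` gives agent 1 exactly the allocation `S`
(so `|S|` equals the number of turns of agent 1 in `π`), then any report `p1''`
that orders the items of `S` in the same relative order as `p1'` and ranks every
item of `O \ S` below every item of `S` still gives agent 1 the allocation `S`
and agent 2 the allocation `O \ S`. -/
theorem statement0 {I : Type*} [DecidableEq I]
    (O : Finset I) (π : List (Fin 2)) (hπ : π.length = O.card)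
    (p2 p1' p1'' : List I) (S : Finset I)
    (hp2 : IsReport O p2) (hp1' : IsReport O p1') (hp1'' : IsReport O p1'')
    (hS : alloc2 p1' p2 π O 0 = S)
    (hcard : S.card = π.count 0)
    (horder : p1''.filter (fun o => decide (o ∈ S)) = p1'.filter (fun o => decide (o ∈ S)))
    (hbelow : p1'' = p1''.filter (fun o => decide (o ∈ S))
        ++ p1''.filter (fun o => decide (o ∉ S))) :
    alloc2 p1'' p2 π O 0 = S ∧ alloc2 p1'' p2 π O 1 = O \ S := by
  unfold alloc2 at hS ⊢
  have hmain := seqAlloc_main O S p1' p1'' p2 hp1' horder hbelow π O S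
    (Finset.Subset.refl O) hS (Finset.Subset.refl S)
  have hcov : ∀ a : Fin 2, ∀ o ∈ O, o ∈ (if a = 0 then p1' else p2) := by
    intro a o ho
    by_cases h : a = 0
    · rw [if_pos h]; exact (hp1'.2 o).2 ho
    · rw [if_neg h]; exact (hp2.2 o).2 ho
  have hone := seqAlloc_one O _ hcov π O (Finset.Subset.refl O) hπ
  constructor
  · rw [hmain, hS]
  · rw [hmain, hone, hS]
end

section
/- In the two-agent manipulation setting, let k₁ be the number of occurrences of agent 1 in π and let S* be the greedy set (obtained by enumerating O as o₁ ≻₁ ⋯ ≻₁ o_m and adding o_j to the current set S whenever S ∪ {o_j} is achievable by agent 1). Then for EVERY additive utility u₁ consistent with ≻₁ and every achievable set B with |B| = k₁, u₁(S*) ≥ u₁(B); that is, S* simultaneously maximizes all additive utilities consistent with ≻₁ over achievable allocations. -/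
open Classical in
/-- Greedy construction of a set: go through the ranking list in order and add an
item whenever the resulting set stays in the given (achievability) predicate. -/
noncomputable def greedy {I : Type*} [DecidableEq I]
    (ach : Finset I → Prop) : List I → Finset I → Finset I
  | [], S => S
  | o :: rest, S =>
    if ach (insert o S) then greedy ach rest (insert o S) else greedy ach rest S

namespace St5

variable {I : Type*} [DecidableEq I]

/-- positions (0-indexed) of agent-1 (`0`) turns in the sequence. -/
def zpos : List (Fin 2) → List ℕ
  | [] => []
  | a :: π => if a = 0 then 0 :: (zpos π).map (· + 1) else (zpos π).map (· + 1)

/-- number of items in `rem` that agent 2 prefers to `s`. -/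
def rnk (p2 : List I) (rem : Finset I) (s : I) : ℕ :=
  (rem.filter fun o => p2.idxOf o < p2.idxOf s).card

/-- counting characterization of achievability. -/
def cond (p2 : List I) (π : List (Fin 2)) (rem S : Finset I) : Prop :=
  S ⊆ rem ∧ S.card ≤ (zpos π).length ∧
    ∀ J, (hJ : J < (zpos π).length) →
      (S.filter fun s => rnk p2 rem s < (zpos π)[J]).card ≤ J

lemma cond_empty (p2 : List I) (π : List (Fin 2)) (rem : Finset I) :
    cond p2 π rem ∅ := by
  refine ⟨Finset.empty_subset _, by simp, fun J hJ => by simp⟩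

lemma cond_mono {p2 : List I} {π : List (Fin 2)} {rem S S' : Finset I}
    (h : cond p2 π rem S) (hsub : S' ⊆ S) : cond p2 π rem S' := by
  refine ⟨hsub.trans h.1, le_trans (Finset.card_le_card hsub) h.2.1, fun J hJ => ?_⟩
  exact le_trans (Finset.card_le_card (Finset.filter_subset_filter _ hsub)) (h.2.2 J hJ)

lemma cond_of_empty_rem {p2 : List I} {π : List (Fin 2)} {S : Finset I} :
    cond p2 π ∅ S ↔ S = ∅ := by
  constructor
  · intro h; exact Finset.subset_empty.mp h.1
  · rintro rfl; exact cond_empty _ _ _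

lemma cond_nil {p2 : List I} {rem S : Finset I} :
    cond p2 [] rem S ↔ S = ∅ := by
  constructor
  · intro h
    have h2 := h.2.1
    simp only [zpos, List.length_nil, Nat.le_zero, Finset.card_eq_zero] at h2
    exact h2
  · rintro rfl; exact cond_empty _ _ _

section rank

variable {O : Finset I} {p2 : List I}

lemma idx_inj (hp2 : IsReport O p2) {a b : I} (ha : a ∈ O) (hb : b ∈ O)
    (h : p2.idxOf a = p2.idxOf b) : a = b :=
  (List.idxOf_inj ((hp2.2 a).mpr ha)).mp h

lemma rnk_lt_of_idx_lt {rem : Finset I} {e a : I} (he : e ∈ rem)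
    (h : p2.idxOf e < p2.idxOf a) : rnk p2 rem e < rnk p2 rem a := by
  apply Finset.card_lt_card
  constructor
  · intro x hx
    simp only [Finset.mem_filter] at hx ⊢
    exact ⟨hx.1, hx.2.trans h⟩
  · intro hcon
    have := hcon (Finset.mem_filter.mpr ⟨he, h⟩)
    simp only [Finset.mem_filter] at this
    exact lt_irrefl _ this.2

lemma rnk_erase_le {rem : Finset I} (a s : I) :
    rnk p2 (rem.erase a) s ≤ rnk p2 rem s := by
  apply Finset.card_le_card
  exact Finset.filter_subset_filter _ (Finset.erase_subset _ _)

lemma rnk_erase_of_lt {rem : Finset I} {a : I} (s : I) (ha : a ∈ rem)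
    (h : p2.idxOf a < p2.idxOf s) :
    rnk p2 (rem.erase a) s + 1 = rnk p2 rem s := by
  unfold rnk
  rw [Finset.filter_erase, Finset.card_erase_of_mem (Finset.mem_filter.mpr ⟨ha, h⟩)]
  have : 1 ≤ (rem.filter fun o => p2.idxOf o < p2.idxOf s).card :=
    Finset.card_pos.mpr ⟨a, Finset.mem_filter.mpr ⟨ha, h⟩⟩
  omega

lemma rnk_erase_of_ge {rem : Finset I} {a : I} (s : I)
    (h : ¬ p2.idxOf a < p2.idxOf s) :
    rnk p2 (rem.erase a) s = rnk p2 rem s := by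
  unfold rnk
  rw [Finset.filter_erase, Finset.erase_eq_of_notMem]
  simp only [Finset.mem_filter]
  tauto

lemma rnk_inj (hp2 : IsReport O p2) {rem : Finset I} (hrem : rem ⊆ O) {s t : I}
    (hs : s ∈ rem) (ht : t ∈ rem) (h : rnk p2 rem s = rnk p2 rem t) : s = t := by
  rcases lt_trichotomy (p2.idxOf s) (p2.idxOf t) with hlt | heq | hgt
  · exact absurd h (Nat.ne_of_lt (rnk_lt_of_idx_lt hs hlt))
  · exact idx_inj hp2 (hrem hs) (hrem ht) heq
  · exact absurd h.symm (Nat.ne_of_lt (rnk_lt_of_idx_lt ht hgt))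

end rank


section condstep

variable {O : Finset I} {p2 : List I}

lemma zpos_cons_zero (π : List (Fin 2)) :
    zpos ((0 : Fin 2) :: π) = 0 :: (zpos π).map (· + 1) := by simp [zpos]

lemma zpos_cons_one {a : Fin 2} (ha : a ≠ 0) (π : List (Fin 2)) :
    zpos (a :: π) = (zpos π).map (· + 1) := by simp [zpos, ha]

/-- the element found by agent 2 is his favourite remaining item. -/
lemma find?_min {rem : Finset I} (hrem : rem ⊆ O) (hp2 : IsReport O p2) {g : I}
    (hg : p2.find? (fun o => decide (o ∈ rem)) = some g) :
    g ∈ rem ∧ ∀ o ∈ rem, p2.idxOf g ≤ p2.idxOf o := by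
  have hgrem : g ∈ rem := by simpa using List.find?_some hg
  refine ⟨hgrem, ?_⟩
  intro o ho
  have ho2 : o ∈ p2 := (hp2.2 o).mpr (hrem ho)
  clear hrem hp2 hgrem
  induction p2 with
  | nil => simp at ho2
  | cons h t ih =>
    by_cases hh : h ∈ rem
    · rw [List.find?_cons_of_pos (by simpa using hh)] at hg
      simp only [Option.some.injEq] at hg
      subst hg
      simp [List.idxOf_cons_self]
    · rw [List.find?_cons_of_neg (by simpa using hh)] at hg
      have hgne : g ≠ h := by
        rintro rfl
        exact hh (by simpa using List.find?_some hg)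
      have hone : o ≠ h := by rintro rfl; exact hh ho
      have ho2' : o ∈ t := by
        rcases List.mem_cons.mp ho2 with h' | h'
        · exact absurd h' hone
        · exact h'
      rw [List.idxOf_cons_ne _ (Ne.symm hgne), List.idxOf_cons_ne _ (Ne.symm hone)]
      exact Nat.succ_le_succ (ih hg ho2')

lemma find?_some_of_nonempty {rem : Finset I} (hrem : rem ⊆ O) (hp2 : IsReport O p2)
    (hne : rem ≠ ∅) : ∃ g, p2.find? (fun o => decide (o ∈ rem)) = some g := by
  obtain ⟨x, hx⟩ := Finset.nonempty_iff_ne_empty.mpr hne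
  have : (p2.find? (fun o => decide (o ∈ rem))).isSome := by
    rw [List.find?_isSome]
    exact ⟨x, (hp2.2 x).mpr (hrem hx), by simpa using hx⟩
  exact Option.isSome_iff_exists.mp this

/-- transfer of `cond` across an agent-2 turn. -/
lemma cond_one {π : List (Fin 2)} {a : Fin 2} (ha : a ≠ 0) {rem S : Finset I}
    (hrem : rem ⊆ O) (hp2 : IsReport O p2) {g : I} (hg : g ∈ rem)
    (hmin : ∀ o ∈ rem, p2.idxOf g ≤ p2.idxOf o) :
    cond p2 (a :: π) rem S ↔ g ∉ S ∧ cond p2 π (rem.erase g) S := by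
  have hzl : (zpos (a :: π)).length = (zpos π).length := by
    rw [zpos_cons_one ha]; simp
  have hidx : ∀ s ∈ rem, s ≠ g → p2.idxOf g < p2.idxOf s := by
    intro s hs hne
    rcases lt_or_eq_of_le (hmin s hs) with h | h
    · exact h
    · exact absurd (idx_inj hp2 (hrem hg) (hrem hs) h) (Ne.symm hne)
  have hgzero : rnk p2 rem g = 0 := by
    unfold rnk
    rw [Finset.card_eq_zero, Finset.filter_eq_empty_iff]
    intro o ho
    exact not_lt.mpr (hmin o ho)
  -- the filter sets coincide
  have hfilter : ∀ (hgS : g ∉ S) (hS : S ⊆ rem) (J : ℕ) (hJ : J < (zpos π).length),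
      (S.filter fun s => rnk p2 rem s < (zpos (a :: π))[J]'(hzl ▸ hJ)).card
        = (S.filter fun s => rnk p2 (rem.erase g) s < (zpos π)[J]).card := by
    intro hgS hS J hJ
    congr 1
    apply Finset.filter_congr
    intro s hs
    have hsne : s ≠ g := by rintro rfl; exact hgS hs
    have := rnk_erase_of_lt (p2 := p2) s hg (hidx s (hS hs) hsne)
    have hz : (zpos (a :: π))[J]'(hzl ▸ hJ) = (zpos π)[J] + 1 := by
      simp [zpos_cons_one ha]
    rw [hz]
    omega
  constructor
  · intro h
    have hgS : g ∉ S := by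
      intro hgSmem
      have hk : 1 ≤ (zpos π).length := by
        by_contra hk
        have : S.card = 0 := by
          have := h.2.1; rw [hzl] at this; omega
        rw [Finset.card_eq_zero] at this
        subst this; simp at hgSmem
      have h0 := h.2.2 0 (by omega)
      have hz : (zpos (a :: π))[0]'(by omega) = (zpos π)[0]'(by omega) + 1 := by
        simp [zpos_cons_one ha]
      have : g ∈ S.filter fun s => rnk p2 rem s < (zpos (a :: π))[0]'(by omega) := by
        rw [Finset.mem_filter]
        exact ⟨hgSmem, by rw [hz, hgzero]; omega⟩
      have hpos : 0 < (S.filter fun s => rnk p2 rem s < (zpos (a :: π))[0]'(by omega)).card :=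
        Finset.card_pos.mpr ⟨g, this⟩
      omega
    refine ⟨hgS, ?_, ?_, ?_⟩
    · intro s hs
      exact Finset.mem_erase.mpr ⟨by rintro rfl; exact hgS hs, h.1 hs⟩
    · rw [← hzl]; exact h.2.1
    · intro J hJ
      rw [← hfilter hgS h.1 J hJ]
      exact h.2.2 J (hzl ▸ hJ)
  · rintro ⟨hgS, h⟩
    have hS : S ⊆ rem := h.1.trans (Finset.erase_subset _ _)
    refine ⟨hS, by rw [hzl]; exact h.2.1, ?_⟩
    intro J hJ
    rw [hfilter hgS hS J (hzl ▸ hJ)]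
    exact h.2.2 J (hzl ▸ hJ)

end condstep


section condzero

variable {O : Finset I} {p2 : List I}

lemma zpos_zero_getElem (π : List (Fin 2)) (J : ℕ) (hJ : J < (zpos π).length) :
    (zpos ((0 : Fin 2) :: π))[J + 1]'(by simp [zpos_cons_zero]; omega) = (zpos π)[J] + 1 := by
  simp [zpos_cons_zero]

/-- any witness pick is sound for the counting condition. -/
lemma cond_zero_sound {π : List (Fin 2)} {rem S : Finset I} {a : I}
    (hp2 : IsReport O p2) (hrem : rem ⊆ O) (ha : a ∈ rem)
    (h : cond p2 π (rem.erase a) (S.erase a)) :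
    cond p2 ((0 : Fin 2) :: π) rem S := by
  have hS : S ⊆ rem := by
    intro s hs
    by_cases hsa : s = a
    · subst hsa; exact ha
    · exact (Finset.erase_subset _ _) (h.1 (Finset.mem_erase.mpr ⟨hsa, hs⟩))
  have hlen : (zpos ((0 : Fin 2) :: π)).length = (zpos π).length + 1 := by
    simp [zpos_cons_zero]
  have hcard : S.card ≤ (S.erase a).card + 1 := by
    by_cases haS : a ∈ S
    · rw [Finset.card_erase_of_mem haS]
      have : 1 ≤ S.card := Finset.card_pos.mpr ⟨a, haS⟩
      omega
    · rw [Finset.erase_eq_of_notMem haS]; omega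
  refine ⟨hS, by rw [hlen]; have := h.2.1; omega, ?_⟩
  intro J hJ
  match J with
  | 0 =>
    have hz : (zpos ((0 : Fin 2) :: π))[0]'hJ = 0 := by simp [zpos_cons_zero]
    rw [hz]
    simp
  | J + 1 =>
    have hJ' : J < (zpos π).length := by rw [hlen] at hJ; omega
    rw [zpos_zero_getElem π J hJ']
    set z := (zpos π)[J] with hzdef
    have hn' := h.2.2 J hJ'
    set T := S.filter fun s => rnk p2 rem s < z + 1 with hT
    set N := (S.erase a).filter fun s => rnk p2 (rem.erase a) s < z with hN
    suffices hTN : T.card ≤ N.card + 1 by omega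
    by_cases hE : ∃ e ∈ T, e ≠ a ∧ rnk p2 (rem.erase a) e = z
    · obtain ⟨e, heT, hea, herk⟩ := hE
      have heS : e ∈ S := (Finset.mem_filter.mp heT).1
      have herm : e ∈ rem := hS heS
      have hermA : e ∈ rem.erase a := Finset.mem_erase.mpr ⟨hea, herm⟩
      have haT : a ∉ T := by
        intro haT
        have hra : rnk p2 rem a < z + 1 := (Finset.mem_filter.mp haT).2
        have hre : rnk p2 rem e < z + 1 := (Finset.mem_filter.mp heT).2
        have hree : rnk p2 rem e = z := by
          have := rnk_erase_le (p2 := p2) (rem := rem) a e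
          omega
        have hidxe : ¬ p2.idxOf a < p2.idxOf e := by
          intro hlt
          have := rnk_erase_of_lt (p2 := p2) e ha hlt
          omega
        have hlt : p2.idxOf e < p2.idxOf a := by
          rcases lt_trichotomy (p2.idxOf e) (p2.idxOf a) with h' | h' | h'
          · exact h'
          · exact absurd (idx_inj hp2 (hrem herm) (hrem ha) h') hea
          · exact absurd h' hidxe
        have := rnk_lt_of_idx_lt (p2 := p2) herm hlt
        omega
      have hsub : T ⊆ insert e N := by
        intro s hsT
        by_cases hse : s = e
        · subst hse; exact Finset.mem_insert_self _ _
        · apply Finset.mem_insert_of_mem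
          have hsS : s ∈ S := (Finset.mem_filter.mp hsT).1
          have hsa : s ≠ a := by rintro rfl; exact haT hsT
          have hsrm : s ∈ rem.erase a := Finset.mem_erase.mpr ⟨hsa, hS hsS⟩
          have hle : rnk p2 (rem.erase a) s ≤ rnk p2 rem s := rnk_erase_le _ _
          have hlt : rnk p2 rem s < z + 1 := (Finset.mem_filter.mp hsT).2
          have hne : rnk p2 (rem.erase a) s ≠ z := by
            intro hcon
            exact hse (rnk_inj hp2 ((Finset.erase_subset a rem).trans hrem) hsrm hermA (hcon.trans herk.symm))
          refine Finset.mem_filter.mpr ⟨Finset.mem_erase.mpr ⟨hsa, hsS⟩, by omega⟩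
      calc T.card ≤ (insert e N).card := Finset.card_le_card hsub
        _ ≤ N.card + 1 := Finset.card_insert_le _ _
    · push_neg at hE
      have hsub : T.erase a ⊆ N := by
        intro s hsT'
        obtain ⟨hsa, hsT⟩ := Finset.mem_erase.mp hsT'
        have hsS : s ∈ S := (Finset.mem_filter.mp hsT).1
        have hle : rnk p2 (rem.erase a) s ≤ rnk p2 rem s := rnk_erase_le _ _
        have hlt : rnk p2 rem s < z + 1 := (Finset.mem_filter.mp hsT).2
        have hne := hE s hsT hsa
        refine Finset.mem_filter.mpr ⟨Finset.mem_erase.mpr ⟨hsa, hsS⟩, by omega⟩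
      calc T.card ≤ (T.erase a).card + 1 := by
            by_cases haT : a ∈ T
            · rw [Finset.card_erase_of_mem haT]
              have : 1 ≤ T.card := Finset.card_pos.mpr ⟨a, haT⟩
              omega
            · rw [Finset.erase_eq_of_notMem haT]; omega
        _ ≤ N.card + 1 := by
            have := Finset.card_le_card hsub; omega

/-- completeness: the favourite element of `S` can be picked first. -/
lemma cond_zero_complete {π : List (Fin 2)} {rem S : Finset I}
    (hp2 : IsReport O p2) (hrem : rem ⊆ O)
    (h : cond p2 ((0 : Fin 2) :: π) rem S) (hne : S.Nonempty) :
    ∃ a ∈ S, cond p2 π (rem.erase a) (S.erase a) := by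
  obtain ⟨a, haS, hamin⟩ := Finset.exists_min_image S (fun s => p2.idxOf s) hne
  have hS : S ⊆ rem := h.1
  have ha : a ∈ rem := hS haS
  have hlen : (zpos ((0 : Fin 2) :: π)).length = (zpos π).length + 1 := by
    simp [zpos_cons_zero]
  have hidx : ∀ s ∈ S, s ≠ a → p2.idxOf a < p2.idxOf s := by
    intro s hs hsa
    rcases lt_or_eq_of_le (hamin s hs) with h' | h'
    · exact h'
    · exact absurd (idx_inj hp2 (hrem ha) (hrem (hS hs)) h') (Ne.symm hsa)
  refine ⟨a, haS, Finset.erase_subset_erase _ hS, ?_, ?_⟩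
  · rw [Finset.card_erase_of_mem haS]
    have := h.2.1
    rw [hlen] at this
    omega
  · intro J hJ
    set z := (zpos π)[J] with hzdef
    have hJ1 : J + 1 < (zpos ((0 : Fin 2) :: π)).length := by rw [hlen]; omega
    have hF := h.2.2 (J + 1) hJ1
    rw [zpos_zero_getElem π J hJ] at hF
    set F := S.filter fun s => rnk p2 rem s < z + 1 with hFdef
    have setEq : ((S.erase a).filter fun s => rnk p2 (rem.erase a) s < z) = F.erase a := by
      ext s
      simp only [Finset.mem_filter, Finset.mem_erase, hFdef]
      constructor
      · rintro ⟨⟨hsa, hsS⟩, hr⟩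
        have := rnk_erase_of_lt (p2 := p2) s ha (hidx s hsS hsa)
        exact ⟨hsa, hsS, by omega⟩
      · rintro ⟨hsa, hsS, hr⟩
        have := rnk_erase_of_lt (p2 := p2) s ha (hidx s hsS hsa)
        exact ⟨⟨hsa, hsS⟩, by omega⟩
    rw [setEq]
    by_cases haF : a ∈ F
    · rw [Finset.card_erase_of_mem haF]
      omega
    · have hFempty : F = ∅ := by
        rw [Finset.eq_empty_iff_forall_notMem]
        intro s hsF
        have hsS : s ∈ S := (Finset.mem_filter.mp hsF).1
        have hsr : rnk p2 rem s < z + 1 := (Finset.mem_filter.mp hsF).2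
        by_cases hsa : s = a
        · subst hsa; exact haF hsF
        · have hlt := rnk_lt_of_idx_lt (p2 := p2) ha (hidx s hsS hsa)
          exact haF (Finset.mem_filter.mpr ⟨haS, by omega⟩)
      rw [hFempty]
      simp

end condzero


/-- Game-form achievability: at agent 1's turns he may take anything remaining;
at agent 2's turns his favourite remaining item is removed (and must avoid `S`). -/
def Ach (p2 : List I) : List (Fin 2) → Finset I → Finset I → Prop
  | [], _, S => S = ∅
  | a :: π, rem, S =>
    if a = 0 then
      if rem = ∅ then Ach p2 π rem S
      else ∃ o ∈ rem, Ach p2 π (rem.erase o) (S.erase o)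
    else
      match p2.find? (fun o => decide (o ∈ rem)) with
      | none => Ach p2 π rem S
      | some g => g ∉ S ∧ Ach p2 π (rem.erase g) S

section achcond

variable {O : Finset I} {p2 : List I}

lemma ach_iff_cond (hp2 : IsReport O p2) :
    ∀ (π : List (Fin 2)) (rem S : Finset I), rem ⊆ O →
      (Ach p2 π rem S ↔ cond p2 π rem S) := by
  intro π
  induction π with
  | nil => intro rem S hrem; rw [cond_nil]; rfl
  | cons a π ih =>
    intro rem S hrem
    by_cases ha : a = 0
    · subst ha
      by_cases hremE : rem = ∅
      · subst hremE
        show Ach p2 ((0 : Fin 2) :: π) ∅ S ↔ _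
        have : Ach p2 ((0 : Fin 2) :: π) ∅ S ↔ Ach p2 π ∅ S := by
          simp [Ach]
        rw [this, ih ∅ S (Finset.empty_subset _), cond_of_empty_rem, cond_of_empty_rem]
      · have hAch : Ach p2 ((0 : Fin 2) :: π) rem S ↔
            ∃ o ∈ rem, Ach p2 π (rem.erase o) (S.erase o) := by
          simp [Ach, hremE]
        rw [hAch]
        constructor
        · rintro ⟨o, ho, hA⟩
          have := (ih (rem.erase o) (S.erase o) ((Finset.erase_subset _ _).trans hrem)).mp hA
          exact cond_zero_sound hp2 hrem ho this
        · intro hc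
          rcases Finset.eq_empty_or_nonempty S with hSe | hSne
          · subst hSe
            obtain ⟨o, ho⟩ := Finset.nonempty_iff_ne_empty.mpr hremE
            exact ⟨o, ho, (ih _ _ ((Finset.erase_subset _ _).trans hrem)).mpr
              (by rw [Finset.erase_empty]; exact cond_empty _ _ _)⟩
          · obtain ⟨o, hoS, hc'⟩ := cond_zero_complete hp2 hrem hc hSne
            exact ⟨o, hc.1 hoS, (ih _ _ ((Finset.erase_subset _ _).trans hrem)).mpr hc'⟩
    · cases hfind : p2.find? (fun o => decide (o ∈ rem)) with
      | none =>
        have hremE : rem = ∅ := by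
          rw [List.find?_eq_none] at hfind
          rw [Finset.eq_empty_iff_forall_notMem]
          intro x hx
          exact hfind x ((hp2.2 x).mpr (hrem hx)) (by simpa using hx)
        have h1 : Ach p2 (a :: π) rem S ↔ Ach p2 π rem S := by
          simp only [Ach, if_neg ha, hfind]
        rw [h1, ih rem S hrem, hremE, cond_of_empty_rem, cond_of_empty_rem]
      | some g =>
        obtain ⟨hg, hmin⟩ := find?_min hrem hp2 hfind
        have : Ach p2 (a :: π) rem S ↔ (g ∉ S ∧ Ach p2 π (rem.erase g) S) := by
          simp [Ach, ha, hfind]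
        rw [this, ih (rem.erase g) S ((Finset.erase_subset _ _).trans hrem),
          cond_one ha hrem hp2 hg hmin]

end achcond


section alloc

variable {O : Finset I} {p2 : List I}

lemma seqAlloc_cons {A : Type*} [DecidableEq A] (prefs : A → List I) (a : A)
    (rest : List A) (rem : Finset I) :
    seqAlloc prefs (a :: rest) rem =
      match (prefs a).find? (fun o => decide (o ∈ rem)) with
      | none => seqAlloc prefs rest rem
      | some o => fun j =>
          if j = a then insert o (seqAlloc prefs rest (rem.erase o) j)
          else seqAlloc prefs rest (rem.erase o) j := rfl

lemma seqAlloc_subset {A : Type*} [DecidableEq A] (prefs : A → List I) :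
    ∀ (π : List A) (rem : Finset I) (j : A), seqAlloc prefs π rem j ⊆ rem := by
  intro π
  induction π with
  | nil => intro rem j; simp [seqAlloc]
  | cons a rest ih =>
    intro rem j
    cases hf : (prefs a).find? (fun o => decide (o ∈ rem)) with
    | none =>
      have h1 : seqAlloc prefs (a :: rest) rem = seqAlloc prefs rest rem := by
        rw [seqAlloc_cons, hf]
      rw [h1]; exact ih rem j
    | some o =>
      have ho : o ∈ rem := by simpa using List.find?_some hf
      have h1 : seqAlloc prefs (a :: rest) rem j =
          if j = a then insert o (seqAlloc prefs rest (rem.erase o) j)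
          else seqAlloc prefs rest (rem.erase o) j := by
        rw [seqAlloc_cons, hf]
      rw [h1]
      by_cases hj : j = a
      · rw [if_pos hj]
        exact Finset.insert_subset ho ((ih _ j).trans (Finset.erase_subset _ _))
      · rw [if_neg hj]
        exact (ih _ j).trans (Finset.erase_subset _ _)

lemma find?_erase_of_not_mem (l : List I) (a : I) (T : Finset I) (ha : a ∉ T) :
    (l.erase a).find? (fun o => decide (o ∈ T)) = l.find? (fun o => decide (o ∈ T)) := by
  induction l with
  | nil => simp
  | cons h t ih =>
    by_cases hha : h = a
    · subst hha
      rw [List.erase_cons_head, List.find?_cons_of_neg (by simpa using ha)]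
    · rw [List.erase_cons_tail (by simpa using hha)]
      by_cases hT : h ∈ T
      · rw [List.find?_cons_of_pos (by simpa using hT),
          List.find?_cons_of_pos (by simpa using hT)]
      · rw [List.find?_cons_of_neg (by simpa using hT),
          List.find?_cons_of_neg (by simpa using hT)]
        exact ih

lemma seqAlloc_congr {A : Type*} [DecidableEq A] (prefs prefs' : A → List I) :
    ∀ (π : List A) (rem : Finset I),
      (∀ b (T : Finset I), T ⊆ rem →
        (prefs b).find? (fun o => decide (o ∈ T)) = (prefs' b).find? (fun o => decide (o ∈ T))) →
      seqAlloc prefs π rem = seqAlloc prefs' π rem := by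
  intro π
  induction π with
  | nil => intro rem h; rfl
  | cons a rest ih =>
    intro rem h
    rw [seqAlloc_cons, seqAlloc_cons, ← h a rem (Finset.Subset.refl _)]
    cases hf : (prefs a).find? (fun o => decide (o ∈ rem)) with
    | none => exact ih rem (fun b T hT => h b T hT)
    | some o =>
      have hrec := ih (rem.erase o) (fun b T hT => h b T (hT.trans (Finset.erase_subset _ _)))
      funext j
      simp only [hrec]

lemma subset_alloc_ach (hp2 : IsReport O p2) {p1 : List I} (hp1 : IsReport O p1) :
    ∀ (π : List (Fin 2)) (rem B : Finset I), rem ⊆ O →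
      B ⊆ seqAlloc (fun a => if a = 0 then p1 else p2) π rem 0 → Ach p2 π rem B := by
  set prefs : Fin 2 → List I := fun a => if a = 0 then p1 else p2 with hprefs
  have hpa0 : prefs 0 = p1 := by simp [hprefs]
  intro π
  induction π with
  | nil =>
    intro rem B hrem hB
    have : B = ∅ := Finset.subset_empty.mp hB
    simpa [Ach] using this
  | cons a π ih =>
    intro rem B hrem hB
    by_cases ha : a = 0
    · subst ha
      cases hf : p1.find? (fun o => decide (o ∈ rem)) with
      | none =>
        have hremE : rem = ∅ := by
          rw [List.find?_eq_none] at hf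
          rw [Finset.eq_empty_iff_forall_notMem]
          intro x hx
          exact hf x ((hp1.2 x).mpr (hrem hx)) (by simpa using hx)
        have h1 : seqAlloc prefs ((0 : Fin 2) :: π) rem = seqAlloc prefs π rem := by
          rw [seqAlloc_cons, hpa0, hf]
        rw [h1] at hB
        have := ih rem B hrem hB
        simp only [Ach, if_pos rfl, if_pos hremE]
        exact this
      | some o =>
        have ho : o ∈ rem := by simpa using List.find?_some hf
        have hremE : rem ≠ ∅ := fun hc => by subst hc; simp at ho
        have h1 : seqAlloc prefs ((0 : Fin 2) :: π) rem 0 =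
            insert o (seqAlloc prefs π (rem.erase o) 0) := by
          rw [seqAlloc_cons, hpa0, hf]
          simp
        rw [h1] at hB
        have hBo : B.erase o ⊆ seqAlloc prefs π (rem.erase o) 0 := by
          intro x hx
          obtain ⟨hxo, hxB⟩ := Finset.mem_erase.mp hx
          rcases Finset.mem_insert.mp (hB hxB) with h' | h'
          · exact absurd h' hxo
          · exact h'
        have := ih (rem.erase o) (B.erase o) ((Finset.erase_subset _ _).trans hrem) hBo
        simp only [Ach, if_pos rfl, if_neg hremE]
        exact ⟨o, ho, this⟩
    · have hpa : prefs a = p2 := by simp [hprefs, ha]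
      cases hf : p2.find? (fun o => decide (o ∈ rem)) with
      | none =>
        have h1 : seqAlloc prefs (a :: π) rem = seqAlloc prefs π rem := by
          rw [seqAlloc_cons, hpa, hf]
        rw [h1] at hB
        have := ih rem B hrem hB
        simp only [Ach, if_neg ha, hf]
        exact this
      | some g =>
        have h0a : (0 : Fin 2) ≠ a := fun hc => ha hc.symm
        have h1 : seqAlloc prefs (a :: π) rem 0 = seqAlloc prefs π (rem.erase g) 0 := by
          rw [seqAlloc_cons, hpa, hf]
          simp [h0a]
        rw [h1] at hB
        have hach := ih (rem.erase g) B ((Finset.erase_subset _ _).trans hrem) hB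
        have hgB : g ∉ B := by
          intro hgB
          have := seqAlloc_subset prefs π (rem.erase g) 0 (hB hgB)
          exact (Finset.mem_erase.mp this).1 rfl
        simp only [Ach, if_neg ha, hf]
        exact ⟨hgB, hach⟩

lemma ach_exists_report (hp2 : IsReport O p2) :
    ∀ (π : List (Fin 2)) (rem B : Finset I), rem ⊆ O → Ach p2 π rem B →
      ∃ p1, IsReport O p1 ∧ B ⊆ seqAlloc (fun a => if a = 0 then p1 else p2) π rem 0 := by
  intro π
  induction π with
  | nil =>
    intro rem B hrem hA
    have hB : B = ∅ := hA
    exact ⟨p2, hp2, by rw [hB]; exact Finset.empty_subset _⟩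
  | cons a π ih =>
    intro rem B hrem hA
    by_cases ha : a = 0
    · subst ha
      by_cases hremE : rem = ∅
      · have hA' : Ach p2 π rem B := by
          simpa only [Ach, if_pos rfl, if_pos hremE, ↓reduceIte] using hA
        obtain ⟨p1, hp1, hsub⟩ := ih rem B hrem hA'
        refine ⟨p1, hp1, ?_⟩
        have hf : p1.find? (fun o => decide (o ∈ rem)) = none := by
          rw [List.find?_eq_none]
          intro x _ hx
          rw [hremE] at hx
          simpa using hx
        have h1 : seqAlloc (fun a => if a = 0 then p1 else p2) ((0 : Fin 2) :: π) rem
            = seqAlloc (fun a => if a = 0 then p1 else p2) π rem := by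
          rw [seqAlloc_cons]
          have hsc : (if (0 : Fin 2) = 0 then p1 else p2) = p1 := if_pos rfl
          rw [hsc, hf]
        rw [h1]
        exact hsub
      · have hA' : ∃ o ∈ rem, Ach p2 π (rem.erase o) (B.erase o) := by
          simpa only [Ach, if_pos rfl, if_neg hremE, ↓reduceIte] using hA
        obtain ⟨o, ho, hAo⟩ := hA'
        obtain ⟨p1', hp1', hsub'⟩ := ih (rem.erase o) (B.erase o)
          ((Finset.erase_subset _ _).trans hrem) hAo
        have hop1' : o ∈ p1' := (hp1'.2 o).mpr (hrem ho)
        set p1 : List I := o :: p1'.erase o with hp1def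
        have hp1 : IsReport O p1 := by
          constructor
          · refine List.Nodup.cons ?_ (hp1'.1.erase o)
            rw [hp1'.1.mem_erase_iff]
            simp
          · intro x
            rw [hp1def, List.mem_cons, hp1'.1.mem_erase_iff]
            constructor
            · rintro (rfl | ⟨_, hx⟩)
              · exact hrem ho
              · exact (hp1'.2 x).mp hx
            · intro hx
              by_cases hxo : x = o
              · exact Or.inl hxo
              · exact Or.inr ⟨hxo, (hp1'.2 x).mpr hx⟩
        refine ⟨p1, hp1, ?_⟩
        have hf : p1.find? (fun o => decide (o ∈ rem)) = some o := by
          rw [hp1def]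
          exact List.find?_cons_of_pos (by simpa using ho)
        have h1 : seqAlloc (fun a => if a = 0 then p1 else p2) ((0 : Fin 2) :: π) rem 0
            = insert o (seqAlloc (fun a => if a = 0 then p1 else p2) π (rem.erase o) 0) := by
          rw [seqAlloc_cons]
          have hsc : (if (0 : Fin 2) = 0 then p1 else p2) = p1 := if_pos rfl
          rw [hsc, hf]
          simp
        rw [h1]
        have hcongr : seqAlloc (fun a => if a = 0 then p1 else p2) π (rem.erase o)
            = seqAlloc (fun a => if a = 0 then p1' else p2) π (rem.erase o) := by
          apply seqAlloc_congr
          intro b T hT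
          by_cases hb : b = 0
          · subst hb
            have hsc : (if (0 : Fin 2) = 0 then p1 else p2) = p1 := if_pos rfl
            have hsc' : (if (0 : Fin 2) = 0 then p1' else p2) = p1' := if_pos rfl
            rw [hsc, hsc']
            have hoT : o ∉ T := fun hc => (Finset.mem_erase.mp (hT hc)).1 rfl
            rw [hp1def, List.find?_cons_of_neg (by simpa using hoT)]
            exact find?_erase_of_not_mem p1' o T hoT
          · have hsc : (if b = 0 then p1 else p2) = p2 := if_neg hb
            have hsc' : (if b = 0 then p1' else p2) = p2 := if_neg hb
            rw [hsc, hsc']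
        rw [hcongr]
        intro x hxB
        by_cases hxo : x = o
        · subst hxo; exact Finset.mem_insert_self _ _
        · exact Finset.mem_insert_of_mem (hsub' (Finset.mem_erase.mpr ⟨hxo, hxB⟩))
    · cases hf : p2.find? (fun o => decide (o ∈ rem)) with
      | none =>
        have hA' : Ach p2 π rem B := by
          simpa only [Ach, if_neg ha, hf] using hA
        obtain ⟨p1, hp1, hsub⟩ := ih rem B hrem hA'
        refine ⟨p1, hp1, ?_⟩
        have hpa : (if a = 0 then p1 else p2) = p2 := if_neg ha
        have h1 : seqAlloc (fun b => if b = 0 then p1 else p2) (a :: π) rem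
            = seqAlloc (fun b => if b = 0 then p1 else p2) π rem := by
          rw [seqAlloc_cons, hpa, hf]
        rw [h1]
        exact hsub
      | some g =>
        have hA' : g ∉ B ∧ Ach p2 π (rem.erase g) B := by
          simpa only [Ach, if_neg ha, hf] using hA
        obtain ⟨p1, hp1, hsub⟩ := ih (rem.erase g) B ((Finset.erase_subset _ _).trans hrem) hA'.2
        refine ⟨p1, hp1, ?_⟩
        have hpa : (if a = 0 then p1 else p2) = p2 := if_neg ha
        have h0a : (0 : Fin 2) ≠ a := fun hc => ha hc.symm
        have h1 : seqAlloc (fun b => if b = 0 then p1 else p2) (a :: π) rem 0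
            = seqAlloc (fun b => if b = 0 then p1 else p2) π (rem.erase g) 0 := by
          rw [seqAlloc_cons, hpa, hf]
          simp [h0a]
        rw [h1]
        exact hsub

lemma achievable_iff_cond (hp2 : IsReport O p2) (π : List (Fin 2)) (B : Finset I) :
    Achievable p2 π O B ↔ cond p2 π O B := by
  rw [← ach_iff_cond hp2 π O B (Finset.Subset.refl O)]
  constructor
  · rintro ⟨p1, hp1, hsub⟩
    exact subset_alloc_ach hp2 hp1 π O B (Finset.Subset.refl O) hsub
  · intro hA
    obtain ⟨p1, hp1, hsub⟩ := ach_exists_report hp2 π O B (Finset.Subset.refl O) hA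
    exact ⟨p1, hp1, hsub⟩

end alloc


section exchange

variable {O : Finset I} {p2 : List I}

/-- matroid exchange property for the counting condition. -/
lemma exchange {π : List (Fin 2)} {S B : Finset I}
    (hS : cond p2 π O S) (hB : cond p2 π O B) (hlt : S.card < B.card) :
    ∃ x ∈ B, x ∉ S ∧ cond p2 π O (insert x S) := by
  have hBSne : (B \ S).Nonempty := by
    rw [Finset.sdiff_nonempty]
    intro hsub
    exact absurd (Finset.card_le_card hsub) (not_le.mpr hlt)
  obtain ⟨x, hxBS, hxmax⟩ := Finset.exists_max_image (B \ S) (fun y => rnk p2 O y) hBSne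
  have hxB : x ∈ B := (Finset.mem_sdiff.mp hxBS).1
  have hxS : x ∉ S := (Finset.mem_sdiff.mp hxBS).2
  refine ⟨x, hxB, hxS, Finset.insert_subset (hB.1 hxB) hS.1, ?_, ?_⟩
  · rw [Finset.card_insert_of_notMem hxS]
    exact le_trans hlt hB.2.1
  · intro J hJ
    set z := (zpos π)[J] with hz
    rw [Finset.filter_insert]
    by_cases hxz : rnk p2 O x < z
    · rw [if_pos hxz]
      have hScard := hS.2.2 J hJ
      rw [← hz] at hScard
      rcases lt_or_eq_of_le hScard with hlt' | heq
      · calc (insert x (S.filter fun s => rnk p2 O s < z)).card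
            ≤ (S.filter fun s => rnk p2 O s < z).card + 1 := Finset.card_insert_le _ _
          _ ≤ J := by omega
      · exfalso
        have hBfil := hB.2.2 J hJ
        rw [← hz] at hBfil
        have h1 : ((B ∩ S).filter fun s => rnk p2 O s < z) ∪ (B \ S)
            ⊆ B.filter fun s => rnk p2 O s < z := by
          apply Finset.union_subset
          · exact Finset.filter_subset_filter _ Finset.inter_subset_left
          · intro y hy
            refine Finset.mem_filter.mpr ⟨(Finset.mem_sdiff.mp hy).1, ?_⟩
            exact lt_of_le_of_lt (hxmax y hy) hxz
        have hdisj : Disjoint ((B ∩ S).filter fun s => rnk p2 O s < z) (B \ S) := by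
          rw [Finset.disjoint_left]
          intro y hy hy'
          exact (Finset.mem_sdiff.mp hy').2
            (Finset.mem_inter.mp (Finset.mem_filter.mp hy).1).2
        have hcard1 : ((B ∩ S).filter fun s => rnk p2 O s < z).card + (B \ S).card ≤ J := by
          rw [← Finset.card_union_of_disjoint hdisj]
          exact le_trans (Finset.card_le_card h1) hBfil
        have h2 : (S.filter fun s => rnk p2 O s < z)
            ⊆ ((S ∩ B).filter fun s => rnk p2 O s < z) ∪ ((S \ B).filter fun s => rnk p2 O s < z) := by
          intro y hy
          obtain ⟨hyS, hyr⟩ := Finset.mem_filter.mp hy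
          by_cases hyB : y ∈ B
          · exact Finset.mem_union_left _ (Finset.mem_filter.mpr ⟨Finset.mem_inter.mpr ⟨hyS, hyB⟩, hyr⟩)
          · exact Finset.mem_union_right _ (Finset.mem_filter.mpr ⟨Finset.mem_sdiff.mpr ⟨hyS, hyB⟩, hyr⟩)
        have hcard2 : J ≤ ((S ∩ B).filter fun s => rnk p2 O s < z).card
            + ((S \ B).filter fun s => rnk p2 O s < z).card := by
          rw [← heq]
          exact le_trans (Finset.card_le_card h2) (Finset.card_union_le _ _)
        have hinter : ((S ∩ B).filter fun s => rnk p2 O s < z).card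
            = ((B ∩ S).filter fun s => rnk p2 O s < z).card := by
          rw [Finset.inter_comm]
        have hle : ((S \ B).filter fun s => rnk p2 O s < z).card ≤ (S \ B).card :=
          Finset.card_filter_le _ _
        have hfin1 := Finset.card_inter_add_card_sdiff B S
        have hfin2 := Finset.card_inter_add_card_sdiff S B
        have hbs : (B ∩ S).card = (S ∩ B).card := by rw [Finset.inter_comm]
        omega
    · rw [if_neg hxz]
      exact hS.2.2 J hJ

end exchange

section greedylem

variable (P : Finset I → Prop) (ρ : I → ℕ)

lemma greedy_superset : ∀ (l : List I) (S : Finset I), S ⊆ greedy P l S := by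
  intro l
  induction l with
  | nil => intro S; rw [greedy]
  | cons o rest ih =>
    intro S
    by_cases h : P (insert o S)
    · rw [greedy, if_pos h]
      exact (Finset.subset_insert o S).trans (ih (insert o S))
    · rw [greedy, if_neg h]
      exact ih S

lemma greedy_subset : ∀ (l : List I) (S : Finset I), greedy P l S ⊆ S ∪ l.toFinset := by
  intro l
  induction l with
  | nil => intro S; rw [greedy]; exact Finset.subset_union_left
  | cons o rest ih =>
    intro S
    by_cases h : P (insert o S)
    · rw [greedy, if_pos h]
      refine (ih (insert o S)).trans ?_
      intro x hx
      rcases Finset.mem_union.mp hx with h' | h'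
      · rcases Finset.mem_insert.mp h' with rfl | h''
        · exact Finset.mem_union_right _ (by simp)
        · exact Finset.mem_union_left _ h''
      · exact Finset.mem_union_right _ (by simp [List.mem_toFinset.mp h'])
    · rw [greedy, if_neg h]
      refine (ih S).trans ?_
      intro x hx
      rcases Finset.mem_union.mp hx with h' | h'
      · exact Finset.mem_union_left _ h'
      · exact Finset.mem_union_right _ (by simp [List.mem_toFinset.mp h'])

lemma greedy_keeps : ∀ (l : List I) (S : Finset I), P S → P (greedy P l S) := by
  intro l
  induction l with
  | nil => intro S h; rw [greedy]; exact h
  | cons o rest ih =>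
    intro S h
    by_cases h' : P (insert o S)
    · rw [greedy, if_pos h']; exact ih _ h'
    · rw [greedy, if_neg h']; exact ih _ h

lemma greedy_reject : ∀ (l : List I) (S : Finset I),
    List.Pairwise (fun a b => ρ a < ρ b) l → (∀ s ∈ S, ∀ x ∈ l, ρ s < ρ x) →
    ∀ x ∈ l, x ∉ greedy P l S →
      ∃ C, C ⊆ greedy P l S ∧ (∀ c ∈ C, ρ c < ρ x) ∧ ¬ P (insert x C) := by
  intro l
  induction l with
  | nil => intro S _ _ x hx; simp at hx
  | cons o rest ih =>
    intro S hpair hord x hx hxG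
    have hpair' := (List.pairwise_cons.mp hpair).2
    have hohd := (List.pairwise_cons.mp hpair).1
    by_cases h : P (insert o S)
    · rw [greedy, if_pos h] at hxG ⊢
      rcases List.mem_cons.mp hx with rfl | hxrest
      · exact absurd (greedy_superset P rest (insert x S) (Finset.mem_insert_self x S)) hxG
      · refine ih (insert o S) hpair' ?_ x hxrest hxG
        intro s hs y hy
        rcases Finset.mem_insert.mp hs with rfl | hsS
        · exact hohd y hy
        · exact hord s hsS y (List.mem_cons_of_mem o hy)
    · rw [greedy, if_neg h] at hxG ⊢
      rcases List.mem_cons.mp hx with rfl | hxrest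
      · exact ⟨S, greedy_superset P rest S, fun c hc => hord c hc x List.mem_cons_self, h⟩
      · refine ih S hpair' ?_ x hxrest hxG
        intro s hs y hy
        exact hord s hs y (List.mem_cons_of_mem o hy)

end greedylem

lemma pairwise_idxOf {l : List I} (h : l.Nodup) :
    l.Pairwise (fun a b => l.idxOf a < l.idxOf b) := by
  induction l with
  | nil => simp
  | cons a t ih =>
    have hna : a ∉ t := (List.nodup_cons.mp h).1
    have ht : t.Nodup := (List.nodup_cons.mp h).2
    rw [List.pairwise_cons]
    constructor
    · intro b hb
      have hba : b ≠ a := fun hc => hna (hc ▸ hb)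
      rw [List.idxOf_cons_self, List.idxOf_cons_ne _ (Ne.symm hba)]
      exact Nat.succ_pos _
    · refine (ih ht).imp_of_mem ?_
      intro x y hxm hym hr
      have hxa : x ≠ a := fun hc => hna (hc ▸ hxm)
      have hya : y ≠ a := fun hc => hna (hc ▸ hym)
      rw [List.idxOf_cons_ne _ (Ne.symm hxa), List.idxOf_cons_ne _ (Ne.symm hya)]
      exact Nat.succ_lt_succ hr


section main

variable {O : Finset I} {p1 p2 : List I} {π : List (Fin 2)}

lemma ach_mono (hp2 : IsReport O p2) {X Y : Finset I} (hXY : X ⊆ Y)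
    (hY : Achievable p2 π O Y) : Achievable p2 π O X := by
  rw [achievable_iff_cond hp2] at hY ⊢
  exact cond_mono hY hXY

/-- the greedy set dominates every achievable set in all counting prefixes. -/
lemma greedy_count (hp2 : IsReport O p2) (hp1 : IsReport O p1)
    {B : Finset I} (hB : Achievable p2 π O B) (n : ℕ) :
    (B.filter fun o => p1.idxOf o ≤ n).card
      ≤ ((greedy (Achievable p2 π O) p1 ∅).filter fun o => p1.idxOf o ≤ n).card := by
  set P := Achievable p2 π O with hP
  set G := greedy P p1 ∅ with hG
  have hPG : P G := greedy_keeps P p1 ∅ ⟨p2, hp2, Finset.empty_subset _⟩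
  have hGO : G ⊆ O := by
    refine (greedy_subset P p1 ∅).trans ?_
    intro x hx
    rcases Finset.mem_union.mp hx with h' | h'
    · simp at h'
    · exact (hp1.2 x).mp (List.mem_toFinset.mp h')
  have hBO : B ⊆ O := ((achievable_iff_cond hp2 π B).mp hB).1
  by_contra hcon
  push_neg at hcon
  have hGn : cond p2 π O (G.filter fun o => p1.idxOf o ≤ n) :=
    cond_mono ((achievable_iff_cond hp2 π G).mp hPG) (Finset.filter_subset _ _)
  have hBn : cond p2 π O (B.filter fun o => p1.idxOf o ≤ n) :=
    cond_mono ((achievable_iff_cond hp2 π B).mp hB) (Finset.filter_subset _ _)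
  obtain ⟨x, hxBn, hxGn, hcondx⟩ := exchange hGn hBn hcon
  obtain ⟨hxB, hxn⟩ := Finset.mem_filter.mp hxBn
  have hxG : x ∉ G := fun h => hxGn (Finset.mem_filter.mpr ⟨h, hxn⟩)
  have hxp1 : x ∈ p1 := (hp1.2 x).mpr (hBO hxB)
  obtain ⟨C, hCG, hCx, hnP⟩ := greedy_reject P (fun o => p1.idxOf o) p1 ∅
    (pairwise_idxOf hp1.1) (by simp) x hxp1 hxG
  apply hnP
  have hPx : P (insert x (G.filter fun o => p1.idxOf o ≤ n)) :=
    (achievable_iff_cond hp2 π _).mpr hcondx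
  refine ach_mono hp2 ?_ hPx
  intro c hc
  rcases Finset.mem_insert.mp hc with rfl | hcC
  · exact Finset.mem_insert_self _ _
  · exact Finset.mem_insert_of_mem (Finset.mem_filter.mpr
      ⟨hCG hcC, le_trans (le_of_lt (hCx c hcC)) hxn⟩)

/-- summation domination from prefix-count domination. -/
lemma sum_dom (hp1 : IsReport O p1) {u : I → ℝ} (hu : Consistent O p1 u) :
    ∀ (m : ℕ) (B G : Finset I), B.card = m → B ⊆ O → G ⊆ O →
      (∀ n, (B.filter fun o => p1.idxOf o ≤ n).card
        ≤ (G.filter fun o => p1.idxOf o ≤ n).card) →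
      ∑ o ∈ B, u o ≤ ∑ o ∈ G, u o := by
  intro m
  induction m with
  | zero =>
    intro B G hBcard hBO hGO hcount
    rw [Finset.card_eq_zero.mp hBcard, Finset.sum_empty]
    exact Finset.sum_nonneg fun o ho => le_of_lt (hu.1 o (hGO ho))
  | succ m ih =>
    intro B G hBcard hBO hGO hcount
    have hBne : B.Nonempty := Finset.card_pos.mp (by omega)
    obtain ⟨b, hbB, hbmin⟩ := Finset.exists_min_image B (fun o => p1.idxOf o) hBne
    have hGfil : ((G.filter fun o => p1.idxOf o ≤ p1.idxOf b)).Nonempty := by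
      rw [← Finset.card_pos]
      refine lt_of_lt_of_le ?_ (hcount (p1.idxOf b))
      exact Finset.card_pos.mpr ⟨b, Finset.mem_filter.mpr ⟨hbB, le_refl _⟩⟩
    obtain ⟨g', hg'⟩ := hGfil
    obtain ⟨hg'G, hg'le⟩ := Finset.mem_filter.mp hg'
    obtain ⟨g, hgG, hgmin⟩ := Finset.exists_min_image G (fun o => p1.idxOf o) ⟨g', hg'G⟩
    have hgb : p1.idxOf g ≤ p1.idxOf b := le_trans (hgmin g' hg'G) hg'le
    have hub : u b ≤ u g := by
      by_cases hbg : g = b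
      · rw [hbg]
      · refine le_of_lt ((hu.2 g (hGO hgG) b (hBO hbB)).mpr ?_)
        have : p1.idxOf g ≠ p1.idxOf b := by
          intro hc
          exact hbg (idx_inj hp1 (hGO hgG) (hBO hbB) hc)
        exact lt_of_le_of_ne hgb this
    have hcount' : ∀ n, ((B.erase b).filter fun o => p1.idxOf o ≤ n).card
        ≤ ((G.erase g).filter fun o => p1.idxOf o ≤ n).card := by
      intro n
      rw [Finset.filter_erase, Finset.filter_erase]
      by_cases hn : p1.idxOf b ≤ n
      · have hbf : b ∈ B.filter fun o => p1.idxOf o ≤ n :=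
          Finset.mem_filter.mpr ⟨hbB, hn⟩
        have hgf : g ∈ G.filter fun o => p1.idxOf o ≤ n :=
          Finset.mem_filter.mpr ⟨hgG, le_trans hgb hn⟩
        rw [Finset.card_erase_of_mem hbf, Finset.card_erase_of_mem hgf]
        have h1 : 1 ≤ (B.filter fun o => p1.idxOf o ≤ n).card :=
          Finset.card_pos.mpr ⟨b, hbf⟩
        have := hcount n
        omega
      · have hempty : (B.filter fun o => p1.idxOf o ≤ n) = ∅ := by
          rw [Finset.eq_empty_iff_forall_notMem]
          intro y hy
          obtain ⟨hyB, hyn⟩ := Finset.mem_filter.mp hy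
          exact hn (le_trans (hbmin y hyB) hyn)
        rw [hempty]
        simp
    have hsum := ih (B.erase b) (G.erase g)
      (by rw [Finset.card_erase_of_mem hbB, hBcard]; rfl)
      ((Finset.erase_subset _ _).trans hBO) ((Finset.erase_subset _ _).trans hGO) hcount'
    rw [← Finset.add_sum_erase B u hbB, ← Finset.add_sum_erase G u hgG]
    exact add_le_add hub hsum

end main

end St5


/-- Let `S*` be the greedy set (enumerate `O` as
`o₁ ≻₁ ⋯ ≻₁ o_m`, i.e. the true ranking list `p1`, adding `o_j` whenever the
current set together with `o_j` is achievable).  Then for EVERY additive utility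
`u` consistent with ≻₁ and every achievable `B` with `|B| = k₁` (the number of
turns of agent 1 in `π`), `u(S*) ≥ u(B)`: `S*` simultaneously maximizes all
consistent additive utilities over achievable allocations. -/
theorem statement5 {I : Type*} [DecidableEq I]
    (O : Finset I) (π : List (Fin 2)) (hπ : π.length = O.card)
    (p2 : List I) (hp2 : IsReport O p2)
    (p1 : List I) (hp1 : IsReport O p1)  -- agent 1's true preference ≻₁
    :
    ∀ u : I → ℝ, Consistent O p1 u →
      ∀ B : Finset I, Achievable p2 π O B → B.card = π.count 0 →
        ∑ o ∈ B, u o ≤ ∑ o ∈ greedy (Achievable p2 π O) p1 ∅, u o := by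
  intro u hu B hB _
  have hBO : B ⊆ O := ((St5.achievable_iff_cond hp2 π B).mp hB).1
  have hGO : greedy (Achievable p2 π O) p1 ∅ ⊆ O := by
    refine (St5.greedy_subset (Achievable p2 π O) p1 ∅).trans ?_
    intro x hx
    rcases Finset.mem_union.mp hx with h' | h'
    · simp at h'
    · exact (hp1.2 x).mp (List.mem_toFinset.mp h')
  exact St5.sum_dom hp1 hu B.card B _ rfl hBO hGO
    (fun n => St5.greedy_count hp2 hp1 hB n)
end

section
/- In the two-agent manipulation setting, let S* be the greedy set (obtained by enumerating O as o₁ ≻₁ ⋯ ≻₁ o_m and adding o_j to the current set S whenever S ∪ {o_j} is achievable by agent 1). For every additive utility u₁ consistent with ≻₁ and every best response ≻₁' of agent 1 with respect to u₁, agent 1's allocation under (≻₁', ≻₂) equals S*. In particular, for two agents, all best responses yield the same allocation for the manipulator, and this allocation does not depend on which consistent utility is chosen. -/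
set_option linter.unusedSectionVars false

namespace S6


variable {I : Type*} [DecidableEq I]

/-- positions (0-based, within the remaining sequence) of agent 0's successive turns;
padded beyond the number of turns so as to stay strictly monotone. -/
def posz : List (Fin 2) → ℕ → ℕ
  | [], t => t
  | a :: rest, t =>
    if a = 0 then
      match t with
      | 0 => 0
      | t + 1 => posz rest t + 1
    else posz rest t + 1

def zer (π : List (Fin 2)) : ℕ := π.count 0

@[simp] lemma posz_nil (t : ℕ) : posz [] t = t := rfl

@[simp] lemma posz_zero_zero (π : List (Fin 2)) : posz (0 :: π) 0 = 0 := by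
  simp [posz]

@[simp] lemma posz_zero_succ (π : List (Fin 2)) (t : ℕ) :
    posz (0 :: π) (t + 1) = posz π t + 1 := by
  simp [posz]

@[simp] lemma posz_one (π : List (Fin 2)) (t : ℕ) :
    posz (1 :: π) t = posz π t + 1 := by
  simp [posz]

lemma posz_lt_succ : ∀ (π : List (Fin 2)) (t : ℕ), posz π t < posz π (t + 1)
  | [], t => Nat.lt_succ_self t
  | a :: rest, t => by
    fin_cases a
    · cases t with
      | zero => simp
      | succ t => simpa using posz_lt_succ rest t
    · simpa using posz_lt_succ rest t

lemma posz_succ_le (π : List (Fin 2)) (t : ℕ) : posz π t + 1 ≤ posz π (t + 1) :=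
  posz_lt_succ π t

@[simp] lemma zer_nil : zer ([] : List (Fin 2)) = 0 := rfl

@[simp] lemma zer_cons_zero (π : List (Fin 2)) : zer (0 :: π) = zer π + 1 := by
  simp [zer]

@[simp] lemma zer_cons_one (π : List (Fin 2)) : zer (1 :: π) = zer π := by
  simp [zer]

/-- first satisfier returned by find? has minimal index -/
lemma find?_min {m : I} {P : I → Bool} :
    ∀ (l : List I), l.find? P = some m → ∀ y ∈ l, P y → l.idxOf m ≤ l.idxOf y := by
  intro l
  induction l with
  | nil => simp
  | cons a l ih =>
    intro h y hy hPy
    by_cases hPa : P a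
    · rw [List.find?_cons_of_pos hPa, Option.some_inj] at h
      subst h
      simp
    · rw [List.find?_cons_of_neg hPa] at h
      have hma : m ≠ a := by
        rintro rfl
        exact hPa (List.find?_some h)
      have hya : y ≠ a := by
        rintro rfl
        exact hPa hPy
      rcases List.mem_cons.1 hy with rfl | hy
      · exact absurd hPy hPa
      · rw [List.idxOf_cons_ne _ hma.symm, List.idxOf_cons_ne _ hya.symm]
        exact Nat.succ_le_succ (ih h y hy hPy)

/-- relative rank of `o` inside `R`, wrt the ranking list `p`. -/
def rrk (p : List I) (R : Finset I) (o : I) : ℕ :=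
  (R.filter fun y => p.idxOf y < p.idxOf o).card

lemma rrk_mono (p : List I) (R : Finset I) {o o' : I} (h : p.idxOf o ≤ p.idxOf o') :
    rrk p R o ≤ rrk p R o' := by
  apply Finset.card_le_card
  intro y hy
  simp only [Finset.mem_filter] at hy ⊢
  exact ⟨hy.1, lt_of_lt_of_le hy.2 h⟩

lemma rrk_lt_of_mem (p : List I) (R : Finset I) {o o' : I} (ho : o ∈ R)
    (h : p.idxOf o < p.idxOf o') : rrk p R o < rrk p R o' := by
  apply Finset.card_lt_card
  constructor
  · intro y hy
    simp only [Finset.mem_filter] at hy ⊢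
    exact ⟨hy.1, lt_trans hy.2 h⟩
  · intro hsub
    have : o ∈ R.filter fun y => p.idxOf y < p.idxOf o' := by
      simp [ho, h]
    have := hsub this
    simp at this

lemma rrk_erase_of_lt (p : List I) (R : Finset I) {x o : I} (hx : x ∈ R)
    (h : p.idxOf x < p.idxOf o) : rrk p (R.erase x) o + 1 = rrk p R o := by
  unfold rrk
  rw [Finset.filter_erase]
  rw [Finset.card_erase_of_mem (by simp [hx, h])]
  have : 0 < (R.filter fun y => p.idxOf y < p.idxOf o).card :=
    Finset.card_pos.2 ⟨x, by simp [hx, h]⟩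
  omega

lemma rrk_erase_of_ge (p : List I) (R : Finset I) {x o : I}
    (h : ¬ p.idxOf x < p.idxOf o) : rrk p (R.erase x) o = rrk p R o := by
  unfold rrk
  rw [Finset.filter_erase, Finset.erase_eq_of_notMem (by simp [h])]


lemma fin2 (a : Fin 2) : a = 0 ∨ a = 1 := by
  rcases a with ⟨(_ | _ | n), h⟩
  · exact Or.inl rfl
  · exact Or.inr rfl
  · omega

/- ### seqAlloc basics -/

section Unfold

variable {A : Type*} [DecidableEq A] (prefs : A → List I)

lemma seqAlloc_nil (j : A) : seqAlloc prefs [] ∅ j = ∅ := rfl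

lemma seqAlloc_cons_none {a : A} {rest : List A} {rem : Finset I}
    (h : (prefs a).find? (fun o => decide (o ∈ rem)) = none) (j : A) :
    seqAlloc prefs (a :: rest) rem j = seqAlloc prefs rest rem j := by
  simp only [seqAlloc, h]

lemma seqAlloc_cons_some_self {a : A} {rest : List A} {rem : Finset I} {o : I}
    (h : (prefs a).find? (fun o => decide (o ∈ rem)) = some o) :
    seqAlloc prefs (a :: rest) rem a = insert o (seqAlloc prefs rest (rem.erase o) a) := by
  simp [seqAlloc, h]

lemma seqAlloc_cons_some_ne {a j : A} {rest : List A} {rem : Finset I} {o : I}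
    (hj : j ≠ a) (h : (prefs a).find? (fun o => decide (o ∈ rem)) = some o) :
    seqAlloc prefs (a :: rest) rem j = seqAlloc prefs rest (rem.erase o) j := by
  simp only [seqAlloc, h, if_neg hj]

end Unfold

lemma pref0 (q p2 : List I) : (fun a : Fin 2 => if a = 0 then q else p2) 0 = q := rfl

lemma pref1 (q p2 : List I) : (fun a : Fin 2 => if a = 0 then q else p2) 1 = p2 := rfl



section SeqAlloc

lemma seqAlloc_subset {A : Type*} [DecidableEq A] (prefs : A → List I) :
    ∀ (π : List A) (R : Finset I) (j : A), seqAlloc prefs π R j ⊆ R := by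
  intro π
  induction π with
  | nil => intro R j; simp [seqAlloc]
  | cons a rest ih =>
    intro R j
    rcases hf : (prefs a).find? (fun o => decide (o ∈ R)) with _ | o
    · simpa [seqAlloc, hf] using ih R j
    · have ho : o ∈ R := by simpa using List.find?_some hf
      by_cases hj : j = a
      · simp only [seqAlloc, hf, hj, if_pos rfl]
        refine Finset.insert_subset ho ?_
        exact (ih _ _).trans (Finset.erase_subset _ _)
      · simp only [seqAlloc, hf, if_neg hj]
        exact (ih _ _).trans (Finset.erase_subset _ _)

lemma seqAlloc_card (p2 q : List I) :
    ∀ (π : List (Fin 2)) (R : Finset I), (∀ x ∈ R, x ∈ q) → (∀ x ∈ R, x ∈ p2) →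
      π.length = R.card →
      (seqAlloc (fun a : Fin 2 => if a = 0 then q else p2) π R 0).card = zer π := by
  intro π
  induction π with
  | nil => intro R _ _ _; simp [seqAlloc]
  | cons a rest ih =>
    intro R hq hp2 hlen
    have hne : R.Nonempty := by
      rw [← Finset.card_pos, ← hlen]; simp
    obtain ⟨y, hy⟩ := hne
    rcases fin2 a with rfl | rfl
    · -- agent 0's turn
      rcases hf : q.find? (fun o => decide (o ∈ R)) with _ | x
      · exact absurd hf (by
          rw [List.find?_eq_none]
          push_neg
          exact ⟨y, hq y hy, by simpa using hy⟩)
      · have hx : x ∈ R := by simpa using List.find?_some hf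
        rw [seqAlloc_cons_some_self _ (a := 0) hf]
        have hsub := seqAlloc_subset (fun a : Fin 2 => if a = 0 then q else p2) rest (R.erase x) 0
        have hxnot : x ∉ seqAlloc (fun a : Fin 2 => if a = 0 then q else p2) rest (R.erase x) 0 :=
          fun hmem => (Finset.mem_erase.1 (hsub hmem)).1 rfl
        rw [Finset.card_insert_of_notMem hxnot]
        rw [ih (R.erase x) (fun z hz => hq z (Finset.mem_of_mem_erase hz))
          (fun z hz => hp2 z (Finset.mem_of_mem_erase hz))
          (by rw [Finset.card_erase_of_mem hx]; simp at hlen ⊢; omega)]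
        simp
    · -- agent 1's turn
      rcases hf : p2.find? (fun o => decide (o ∈ R)) with _ | x
      · exact absurd hf (by
          rw [List.find?_eq_none]
          push_neg
          exact ⟨y, hp2 y hy, by simpa using hy⟩)
      · have hx : x ∈ R := by simpa using List.find?_some hf
        rw [seqAlloc_cons_some_ne _ (a := 1) (by decide) hf]
        rw [ih (R.erase x) (fun z hz => hq z (Finset.mem_of_mem_erase hz))
          (fun z hz => hp2 z (Finset.mem_of_mem_erase hz))
          (by rw [Finset.card_erase_of_mem hx]; simp at hlen ⊢; omega)]
        simp

end SeqAlloc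

/- ### the counting condition -/

lemma rrk_erase_le (p : List I) (R : Finset I) (x o : I) :
    rrk p (R.erase x) o ≤ rrk p R o :=
  Finset.card_le_card (Finset.filter_subset_filter _ (Finset.erase_subset _ _))

def CondRel (p2 : List I) (π : List (Fin 2)) (R S : Finset I) : Prop :=
  S ⊆ R ∧ S.card ≤ zer π ∧ ∀ t, (S.filter fun o => rrk p2 R o < posz π t).card ≤ t

/-- necessity: every allocation of agent 0 satisfies the counting condition. -/
lemma nec (p2 q : List I) :
    ∀ (π : List (Fin 2)) (R : Finset I), (∀ x ∈ R, x ∈ p2) →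
      CondRel p2 π R (seqAlloc (fun a : Fin 2 => if a = 0 then q else p2) π R 0) := by
  intro π
  induction π with
  | nil =>
    intro R hmem
    exact ⟨by simp [seqAlloc], by simp [seqAlloc, zer], fun t => by simp [seqAlloc]; exact (Finset.card_le_card (Finset.filter_subset _ _)).trans (by simp)⟩
  | cons a rest ih =>
    intro R hmem
    rcases fin2 a with rfl | rfl
    · rcases hf : q.find? (fun o => decide (o ∈ R)) with _ | x
      · rw [seqAlloc_cons_none _ (a := 0) hf]
        obtain ⟨hsub, hcard, hcount⟩ := ih R hmem
        refine ⟨hsub, hcard.trans (by simp), ?_⟩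
        intro t
        cases t with
        | zero => simp [posz_zero_zero]
        | succ t =>
          rw [posz_zero_succ]
          refine le_trans (Finset.card_le_card ?_) (hcount (t + 1))
          intro o ho
          simp only [Finset.mem_filter] at ho ⊢
          exact ⟨ho.1, lt_of_lt_of_le ho.2 (posz_succ_le rest t)⟩
      · have hx : x ∈ R := by simpa using List.find?_some hf
        rw [seqAlloc_cons_some_self _ (a := 0) hf]
        obtain ⟨hsub, hcard, hcount⟩ :=
          ih (R.erase x) (fun z hz => hmem z (Finset.mem_of_mem_erase hz))
        set A' := seqAlloc (fun a : Fin 2 => if a = 0 then q else p2) rest (R.erase x) 0 with hA'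
        have hxA' : x ∉ A' := fun h => (Finset.mem_erase.1 (hsub h)).1 rfl
        refine ⟨Finset.insert_subset hx (hsub.trans (Finset.erase_subset _ _)), ?_, ?_⟩
        · rw [Finset.card_insert_of_notMem hxA', zer_cons_zero]
          omega
        · intro t
          cases t with
          | zero => simp [posz_zero_zero]
          | succ t =>
            rw [posz_zero_succ, Finset.filter_insert]
            by_cases hcx : rrk p2 R x < posz rest t + 1
            · rw [if_pos hcx]
              have hsub2 : A'.filter (fun o => rrk p2 R o < posz rest t + 1) ⊆
                  A'.filter (fun o => rrk p2 (R.erase x) o < posz rest t) := by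
                intro o ho
                simp only [Finset.mem_filter] at ho ⊢
                refine ⟨ho.1, ?_⟩
                have hoR : o ∈ R.erase x := hsub ho.1
                have hox : o ≠ x := (Finset.mem_erase.1 hoR).1
                have hoR' : o ∈ R := Finset.mem_of_mem_erase hoR
                rcases lt_trichotomy (p2.idxOf x) (p2.idxOf o) with hlt | heq | hgt
                · have h1 := rrk_erase_of_lt p2 R hx hlt
                  omega
                · exact absurd ((List.idxOf_inj (hmem x hx)).1 heq) hox.symm
                · have h1 : rrk p2 (R.erase x) o = rrk p2 R o :=
                    rrk_erase_of_ge p2 R (by omega)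
                  have h2 : rrk p2 R o < rrk p2 R x := rrk_lt_of_mem p2 R hoR' hgt
                  omega
              have h3 := Finset.card_le_card hsub2
              have h4 := hcount t
              have h5 := Finset.card_insert_le x (A'.filter (fun o => rrk p2 R o < posz rest t + 1))
              omega
            · rw [if_neg hcx]
              refine le_trans (Finset.card_le_card ?_) (hcount (t + 1))
              intro o ho
              simp only [Finset.mem_filter] at ho ⊢
              refine ⟨ho.1, ?_⟩
              have := rrk_erase_le p2 R x o
              have := posz_succ_le rest t
              omega
    · rcases hf : p2.find? (fun o => decide (o ∈ R)) with _ | m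
      · have hR : R = ∅ := by
          by_contra hne
          obtain ⟨y, hy⟩ := Finset.nonempty_iff_ne_empty.2 hne
          have := List.find?_eq_none.1 hf y (hmem y hy)
          simp [hy] at this
        rw [seqAlloc_cons_none _ (a := 1) hf]
        subst hR
        have hempty : seqAlloc (fun a : Fin 2 => if a = 0 then q else p2) rest (∅ : Finset I) 0 = ∅ :=
          Finset.subset_empty.1 (seqAlloc_subset _ rest ∅ 0)
        exact ⟨by simp [hempty], by simp [hempty], fun t => by simp [hempty]⟩
      · have hm : m ∈ R := by simpa using List.find?_some hf
        have hmin : ∀ y ∈ R, p2.idxOf m ≤ p2.idxOf y := fun y hy =>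
          find?_min p2 hf y (hmem y hy) (by simpa using hy)
        rw [seqAlloc_cons_some_ne _ (a := 1) (by decide) hf]
        obtain ⟨hsub, hcard, hcount⟩ :=
          ih (R.erase m) (fun z hz => hmem z (Finset.mem_of_mem_erase hz))
        refine ⟨hsub.trans (Finset.erase_subset _ _), by simpa using hcard, ?_⟩
        intro t
        rw [posz_one]
        refine le_trans (Finset.card_le_card ?_) (hcount t)
        intro o ho
        simp only [Finset.mem_filter] at ho ⊢
        refine ⟨ho.1, ?_⟩
        have hoR : o ∈ R.erase m := hsub ho.1
        have hom : o ≠ m := (Finset.mem_erase.1 hoR).1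
        have hoR' : o ∈ R := Finset.mem_of_mem_erase hoR
        have hlt : p2.idxOf m < p2.idxOf o := by
          rcases lt_or_eq_of_le (hmin o hoR') with h | h
          · exact h
          · exact absurd ((List.idxOf_inj (hmem m hm)).1 h) hom.symm
        have h1 := rrk_erase_of_lt p2 R hm hlt
        omega

/-- sufficiency simulation: if the counting condition holds, agent 0 gets all of `L`
by reporting `front ++ L ++ rest` (elements of `front` already gone). -/
lemma sim (p2 rest : List I) :
    ∀ (π : List (Fin 2)) (R : Finset I) (front L : List I),
      (∀ x ∈ front, x ∉ R) →
      L.Pairwise (fun a b => p2.idxOf a < p2.idxOf b) →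
      (∀ x ∈ L, x ∈ R) →
      (∀ x ∈ R, x ∈ p2) →
      R.card ≤ π.length →
      (∀ t, (L.toFinset.filter fun o => rrk p2 R o < posz π t).card ≤ t) →
      ∀ x ∈ L, x ∈ seqAlloc (fun a : Fin 2 => if a = 0 then front ++ L ++ rest else p2) π R 0 := by
  intro π
  induction π with
  | nil =>
    intro R front L hfront hpw hLR hRp2 hlen hcount x hx
    have hR : R = ∅ := Finset.card_eq_zero.1 (le_antisymm (by simpa using hlen) (Nat.zero_le _))
    exact absurd (hLR x hx) (by simp [hR])
  | cons a π' ih =>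
    intro R front L hfront hpw hLR hRp2 hlen hcount x hx
    rcases fin2 a with rfl | rfl
    · -- agent 0's turn: he picks the head of L
      cases L with
      | nil => simp at hx
      | cons s L' =>
        have hsR : s ∈ R := hLR s (by simp)
        obtain ⟨hs_all, hpw'⟩ := List.pairwise_cons.1 hpw
        have hlisteq : front ++ (s :: L') ++ rest = (front ++ [s]) ++ L' ++ rest := by simp
        rw [show (fun a : Fin 2 => if a = 0 then front ++ (s :: L') ++ rest else p2)
            = (fun a : Fin 2 => if a = 0 then (front ++ [s]) ++ L' ++ rest else p2) from by
          simp only [hlisteq]]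
        have hfind : ((front ++ [s]) ++ L' ++ rest).find? (fun o => decide (o ∈ R)) = some s := by
          rw [show (front ++ [s]) ++ L' ++ rest = front ++ ([s] ++ (L' ++ rest)) from by simp]
        
          rw [List.find?_append,
            List.find?_eq_none.2 (fun y hy => by simpa using hfront y hy)]
          simp [hsR]
        rw [seqAlloc_cons_some_self _ (a := 0) hfind]
        rcases List.mem_cons.1 hx with rfl | hx'
        · exact Finset.mem_insert_self _ _
        refine Finset.mem_insert_of_mem ?_
        have hne : ∀ y ∈ L', y ≠ s := by
          intro y hy heq
          have := hs_all y hy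
          rw [heq] at this
          omega
        apply ih (R.erase s) (front ++ [s]) L' ?_ hpw' ?_ ?_ ?_ ?_ x hx'
        · intro y hy
          rcases List.mem_append.1 hy with hy | hy
          · exact fun h => hfront y hy (Finset.mem_of_mem_erase h)
          · have : y = s := by simpa using hy
            subst this
            exact Finset.notMem_erase _ _
        · intro y hy
          exact Finset.mem_erase.2 ⟨hne y hy, hLR y (List.mem_cons_of_mem _ hy)⟩
        · intro y hy
          exact hRp2 y (Finset.mem_of_mem_erase hy)
        · rw [Finset.card_erase_of_mem hsR]
          have : 0 < R.card := Finset.card_pos.2 ⟨s, hsR⟩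
          simp only [List.length_cons] at hlen
          omega
        · intro t
          have hkey : ∀ o ∈ L', rrk p2 (R.erase s) o + 1 = rrk p2 R o := fun o ho =>
            rrk_erase_of_lt p2 R hsR (hs_all o ho)
          by_cases hcs : rrk p2 R s < posz π' t + 1
          · have h7 := hcount (t + 1)
            rw [posz_zero_succ] at h7
            have hs_in : s ∈ ((s :: L').toFinset.filter
                (fun o => rrk p2 R o < posz π' t + 1)) := by
              simp [hcs]; omega
            have hsub2 : L'.toFinset.filter (fun o => rrk p2 (R.erase s) o < posz π' t) ⊆
                ((s :: L').toFinset.filter (fun o => rrk p2 R o < posz π' t + 1)).erase s := by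
              intro o ho
              simp only [Finset.mem_filter, List.mem_toFinset] at ho
              have h1 := hkey o ho.1
              refine Finset.mem_erase.2 ⟨hne o ho.1, ?_⟩
              simp only [Finset.mem_filter, List.mem_toFinset]
              exact ⟨List.mem_cons_of_mem _ ho.1, by omega⟩
            have h8 := Finset.card_le_card hsub2
            rw [Finset.card_erase_of_mem hs_in] at h8
            have h9 := Finset.card_pos.2 ⟨s, hs_in⟩
            omega
          · have : L'.toFinset.filter (fun o => rrk p2 (R.erase s) o < posz π' t) = ∅ := by
              rw [Finset.filter_eq_empty_iff]
              intro o ho h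
              simp only [List.mem_toFinset] at ho
              have h1 := hkey o ho
              have h2 : rrk p2 R s ≤ rrk p2 R o :=
                rrk_mono p2 R (le_of_lt (hs_all o ho))
              omega
            simp [this]
    · -- agent 1's turn: he picks his favorite, which is not in L
      have hxR : x ∈ R := hLR x hx
      rcases hf : p2.find? (fun o => decide (o ∈ R)) with _ | m
      · exact absurd (List.find?_eq_none.1 hf x (hRp2 x hxR)) (by simp [hxR])
      · have hm : m ∈ R := by simpa using List.find?_some hf
        have hmin : ∀ y ∈ R, p2.idxOf m ≤ p2.idxOf y := fun y hy =>
          find?_min p2 hf y (hRp2 y hy) (by simpa using hy)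
        have hrrk0 : rrk p2 R m = 0 := by
          have : (R.filter fun y => p2.idxOf y < p2.idxOf m) = ∅ := by
            rw [Finset.filter_eq_empty_iff]
            intro y hy h
            exact absurd (hmin y hy) (by omega)
          simp [rrk, this]
        have hmL : m ∉ L := by
          intro hmL
          have h0 := hcount 0
          rw [posz_one] at h0
          have hmem : m ∈ L.toFinset.filter (fun o => rrk p2 R o < posz π' 0 + 1) := by
            simp only [Finset.mem_filter, List.mem_toFinset]
            exact ⟨hmL, by omega⟩
          have := Finset.card_pos.2 ⟨m, hmem⟩
          omega
        have hltm : ∀ o ∈ L, p2.idxOf m < p2.idxOf o := by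
          intro o ho
          have hoR : o ∈ R := hLR o ho
          rcases lt_or_eq_of_le (hmin o hoR) with h | h
          · exact h
          · exact absurd ((List.idxOf_inj (List.mem_of_find?_eq_some hf)).1 h)
              (fun e => hmL (e ▸ ho))
        rw [seqAlloc_cons_some_ne _ (a := 1) (by decide) hf]
        apply ih (R.erase m) front L ?_ hpw ?_ ?_ ?_ ?_ x hx
        · exact fun y hy h => hfront y hy (Finset.mem_of_mem_erase h)
        · intro y hy
          exact Finset.mem_erase.2 ⟨fun e => hmL (e ▸ hy), hLR y hy⟩
        · exact fun y hy => hRp2 y (Finset.mem_of_mem_erase hy)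
        · rw [Finset.card_erase_of_mem hm]
          have : 0 < R.card := Finset.card_pos.2 ⟨m, hm⟩
          simp only [List.length_cons] at hlen
          omega
        · intro t
          have h0 := hcount t
          rw [posz_one] at h0
          refine le_trans (Finset.card_le_card ?_) h0
          intro o ho
          simp only [Finset.mem_filter, List.mem_toFinset] at ho ⊢
          have h1 := rrk_erase_of_lt p2 R hm (hltm o ho.1)
          exact ⟨ho.1, by omega⟩

/- ### bridging achievability and the counting condition -/

lemma cond_downward (p2 : List I) (π : List (Fin 2)) (R S T : Finset I)
    (h : CondRel p2 π R T) (hST : S ⊆ T) : CondRel p2 π R S :=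
  ⟨hST.trans h.1, le_trans (Finset.card_le_card hST) h.2.1, fun t =>
    le_trans (Finset.card_le_card (Finset.filter_subset_filter _ hST)) (h.2.2 t)⟩

lemma nodup_pairwise_indexOf (l : List I) (h : l.Nodup) :
    l.Pairwise fun a b => l.idxOf a < l.idxOf b := by
  rw [List.pairwise_iff_get]
  intro i j hij
  rw [List.get_eq_getElem, List.get_eq_getElem,
    h.idxOf_getElem, h.idxOf_getElem]
  exact hij

lemma achievable_iff (O : Finset I) (π : List (Fin 2)) (hπ : π.length = O.card)
    (p2 : List I) (hp2 : IsReport O p2) (S : Finset I) :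
    Achievable p2 π O S ↔ CondRel p2 π O S := by
  constructor
  · rintro ⟨q, _, hsub⟩
    exact cond_downward _ _ _ _ _ (nec p2 q π O fun x hx => (hp2.2 x).2 hx) hsub
  · rintro ⟨hsub, hcard, hcount⟩
    set L : List I := p2.filter (fun o => decide (o ∈ S)) with hL
    set rest : List I := p2.filter (fun o => decide (o ∉ S)) with hrest
    have hLS : ∀ o, o ∈ L ↔ o ∈ S := by
      intro o
      rw [hL, List.mem_filter]
      constructor
      · rintro ⟨_, h⟩; simpa using h
      · intro h; exact ⟨(hp2.2 o).2 (hsub h), by simpa using h⟩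
    have hLfin : L.toFinset = S := by
      ext o; rw [List.mem_toFinset]; exact hLS o
    refine ⟨L ++ rest, ⟨?_, ?_⟩, ?_⟩
    · refine (hp2.1.filter _).append (hp2.1.filter _) ?_
      intro a haL haR
      rw [hrest, List.mem_filter] at haR
      have h2 := haR.2
      simp only [decide_eq_true_eq] at h2
      exact h2 ((hLS a).1 haL)
    · intro o
      rw [List.mem_append, hL, hrest, List.mem_filter, List.mem_filter, ← hp2.2 o]
      by_cases h : o ∈ S <;> simp [h] <;> tauto
    · intro x hxS
      have hxL : x ∈ L := (hLS x).2 hxS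
      have := sim p2 rest π O [] L (by simp)
        ((nodup_pairwise_indexOf p2 hp2.1).sublist List.filter_sublist)
        (fun y hy => hsub ((hLS y).1 hy))
        (fun y hy => (hp2.2 y).2 hy)
        (le_of_eq hπ.symm)
        (by
          intro t
          rw [hLfin]
          exact hcount t)
        x hxL
      simpa [alloc2] using this

/-- augmentation / exchange property of the counting condition. -/
lemma cond_aug (p2 : List I) (π : List (Fin 2)) (O S T : Finset I)
    (hS : CondRel p2 π O S) (hT : CondRel p2 π O T) (hc : S.card < T.card) :
    ∃ x ∈ T, x ∉ S ∧ CondRel p2 π O (insert x S) := by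
  have hne : (T \ S).Nonempty := by
    rw [Finset.sdiff_nonempty]
    intro h
    exact absurd (Finset.card_le_card h) (by omega)
  obtain ⟨x, hxTS, hmax⟩ := Finset.exists_max_image (T \ S) (fun o => p2.idxOf o) hne
  obtain ⟨hxT, hxS⟩ := Finset.mem_sdiff.1 hxTS
  refine ⟨x, hxT, hxS, Finset.insert_subset (hT.1 hxT) hS.1, ?_, ?_⟩
  · rw [Finset.card_insert_of_notMem hxS]
    have := hT.2.1
    omega
  · intro t
    rw [Finset.filter_insert]
    by_cases hcx : rrk p2 O x < posz π t
    · rw [if_pos hcx]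
      have hTS : T \ S ⊆ T.filter (fun o => rrk p2 O o < posz π t) := by
        intro y hy
        obtain ⟨hyT, hyS⟩ := Finset.mem_sdiff.1 hy
        refine Finset.mem_filter.2 ⟨hyT, ?_⟩
        exact lt_of_le_of_lt (rrk_mono p2 O (hmax y hy)) hcx
      have hIT : (S ∩ T).filter (fun o => rrk p2 O o < posz π t) ⊆ T.filter (fun o => rrk p2 O o < posz π t) :=
        Finset.filter_subset_filter _ Finset.inter_subset_right
      have hdisj : Disjoint (T \ S) ((S ∩ T).filter (fun o => rrk p2 O o < posz π t)) := by
        rw [Finset.disjoint_left]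
        intro a ha hb
        exact (Finset.mem_sdiff.1 ha).2 (Finset.mem_inter.1 (Finset.mem_filter.1 hb).1).1
      have h2 : (T \ S).card + ((S ∩ T).filter (fun o => rrk p2 O o < posz π t)).card ≤ (T.filter (fun o => rrk p2 O o < posz π t)).card := by
        rw [← Finset.card_union_of_disjoint hdisj]
        exact Finset.card_le_card (Finset.union_subset hTS hIT)
      have h3 : (S.filter (fun o => rrk p2 O o < posz π t)).card ≤ (S \ T).card + ((S ∩ T).filter (fun o => rrk p2 O o < posz π t)).card := by
        conv_lhs => rw [← Finset.sdiff_union_inter S T]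
        rw [Finset.filter_union]
        refine le_trans (Finset.card_union_le _ _) ?_
        have := Finset.card_le_card (Finset.filter_subset (fun o => rrk p2 O o < posz π t) (S \ T))
        omega
      have h4 : (S \ T).card + 1 ≤ (T \ S).card := by
        have e1 := Finset.card_sdiff_add_card_inter S T
        have e2 := Finset.card_sdiff_add_card_inter T S
        rw [Finset.inter_comm] at e2
        omega
      have h5 := hT.2.2 t
      have h6 := Finset.card_insert_le x (S.filter (fun o => rrk p2 O o < posz π t))
      omega
    · rw [if_neg hcx]
      exact hS.2.2 t

/- ### greedy lemmas -/

section Greedy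

variable (P : Finset I → Prop)

lemma greedy_nil (S : Finset I) : greedy P [] S = S := by simp [greedy]

open Classical in
lemma greedy_cons (o : I) (l : List I) (S : Finset I) :
    greedy P (o :: l) S =
      if P (insert o S) then greedy P l (insert o S) else greedy P l S := by
  simp [greedy]

lemma subset_greedy : ∀ (l : List I) (S : Finset I), S ⊆ greedy P l S := by
  intro l
  induction l with
  | nil => intro S; rw [greedy_nil]
  | cons o l ih =>
    intro S
    rw [greedy_cons]
    by_cases h : P (insert o S)
    · rw [if_pos h]
      exact (Finset.subset_insert o S).trans (ih _)
    · rw [if_neg h]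
      exact ih _

lemma greedy_subset : ∀ (l : List I) (S : Finset I), greedy P l S ⊆ S ∪ l.toFinset := by
  intro l
  induction l with
  | nil => intro S; rw [greedy_nil]; simp
  | cons o l ih =>
    intro S
    rw [greedy_cons]
    by_cases h : P (insert o S)
    · rw [if_pos h]
      refine (ih _).trans ?_
      intro y hy
      rcases Finset.mem_union.1 hy with hy | hy
      · rcases Finset.mem_insert.1 hy with rfl | hy
        · simp
        · exact Finset.mem_union_left _ hy
      · simp only [List.toFinset_cons, Finset.mem_union, Finset.mem_insert]
        tauto
    · rw [if_neg h]
      refine (ih _).trans ?_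
      intro y hy
      simp only [List.toFinset_cons, Finset.mem_union, Finset.mem_insert] at *
      tauto

lemma greedy_pred : ∀ (l : List I) (S : Finset I), P S → P (greedy P l S) := by
  intro l
  induction l with
  | nil => intro S h; rwa [greedy_nil]
  | cons o l ih =>
    intro S h
    rw [greedy_cons]
    by_cases h' : P (insert o S)
    · rw [if_pos h']; exact ih _ h'
    · rw [if_neg h']; exact ih _ h

lemma greedy_append : ∀ (l1 l2 : List I) (S : Finset I),
    greedy P (l1 ++ l2) S = greedy P l2 (greedy P l1 S) := by
  intro l1
  induction l1 with
  | nil => intro l2 S; rw [greedy_nil]; rfl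
  | cons o l1 ih =>
    intro l2 S
    rw [List.cons_append, greedy_cons, greedy_cons]
    by_cases h : P (insert o S)
    · rw [if_pos h, ih, if_pos h]
    · rw [if_neg h, ih, if_neg h]

lemma greedy_max
    (hdc : ∀ S T : Finset I, T ⊆ S → P S → P T)
    (haug : ∀ S T : Finset I, P S → P T → S.card < T.card →
      ∃ x ∈ T, x ∉ S ∧ P (insert x S)) :
    ∀ (l : List I) (U S : Finset I), P S → S ⊆ U → (∀ x ∈ l, x ∉ U) → l.Nodup →
      (∀ T, P T → T ⊆ U → T.card ≤ S.card) →
      ∀ T, P T → T ⊆ U ∪ l.toFinset → T.card ≤ (greedy P l S).card := by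
  intro l
  induction l with
  | nil =>
    intro U S hPS _ _ _ hmax T hPT hTU
    rw [greedy_nil]
    exact hmax T hPT (by simpa using hTU)
  | cons o l ih =>
    intro U S hPS hSU hlU hnd hmax T hPT hTU
    have hoU : o ∉ U := hlU o (by simp)
    have hoS : o ∉ S := fun h => hoU (hSU h)
    obtain ⟨hol, hnd'⟩ : o ∉ l ∧ l.Nodup := by simpa [List.nodup_cons] using hnd
    have hTU' : T ⊆ (insert o U) ∪ l.toFinset := by
      intro y hy
      have := hTU hy
      simp only [List.toFinset_cons, Finset.mem_union, Finset.mem_insert] at *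
      tauto
    rw [greedy_cons]
    by_cases h : P (insert o S)
    · rw [if_pos h]
      refine ih (insert o U) (insert o S) h ?_ ?_ hnd' ?_ T hPT hTU'
      · exact Finset.insert_subset_insert _ hSU
      · intro x hx
        simp only [Finset.mem_insert, not_or]
        exact ⟨fun e => hol (e ▸ hx), hlU x (List.mem_cons_of_mem _ hx)⟩
      · intro T' hPT' hT'U
        have h1 : T'.erase o ⊆ U := by
          intro y hy
          have h2 := hT'U (Finset.mem_of_mem_erase hy)
          rcases Finset.mem_insert.1 h2 with rfl | h2
          · exact absurd rfl (Finset.mem_erase.1 hy).1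
          · exact h2
        have h3 := hmax (T'.erase o) (hdc T' (T'.erase o) (Finset.erase_subset _ _) hPT') h1
        have h4 := Finset.card_erase_of_mem (a := o) (s := T')
        have h5 := Finset.card_insert_of_notMem hoS
        by_cases hoT' : o ∈ T'
        · have := h4 hoT'
          have h6 : 0 < T'.card := Finset.card_pos.2 ⟨o, hoT'⟩
          omega
        · rw [Finset.erase_eq_of_notMem hoT'] at h3
          omega
    · rw [if_neg h]
      refine ih (insert o U) S hPS (hSU.trans (Finset.subset_insert _ _)) ?_ hnd' ?_ T hPT hTU'
      · intro x hx
        simp only [Finset.mem_insert, not_or]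
        exact ⟨fun e => hol (e ▸ hx), hlU x (List.mem_cons_of_mem _ hx)⟩
      · intro T' hPT' hT'U
        by_contra hlt
        push_neg at hlt
        obtain ⟨x, hxT', hxS, hPx⟩ := haug S T' hPS hPT' hlt
        rcases Finset.mem_insert.1 (hT'U hxT') with rfl | hxU
        · exact h hPx
        · have h1 : insert x S ⊆ U := Finset.insert_subset hxU hSU
          have h2 := hmax (insert x S) hPx h1
          rw [Finset.card_insert_of_notMem hxS] at h2
          omega

end Greedy

/- ### summation lemmas -/

lemma inter_insert_card_mem {A X : Finset I} {o : I} (hA : o ∈ A) (hX : o ∉ X) :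
    (A ∩ insert o X).card = (A ∩ X).card + 1 := by
  have h : A ∩ insert o X = insert o (A ∩ X) := by
    ext y
    simp only [Finset.mem_inter, Finset.mem_insert]
    constructor
    · rintro ⟨hy, rfl | hy2⟩
      · exact Or.inl rfl
      · exact Or.inr ⟨hy, hy2⟩
    · rintro (rfl | ⟨h1, h2⟩)
      · exact ⟨hA, Or.inl rfl⟩
      · exact ⟨h1, Or.inr h2⟩
  rw [h, Finset.card_insert_of_notMem (by simp [hX])]

lemma inter_insert_of_not_mem {A X : Finset I} {o : I} (hA : o ∉ A) :
    A ∩ insert o X = A ∩ X := by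
  ext y
  simp only [Finset.mem_inter, Finset.mem_insert]
  constructor
  · rintro ⟨hy, rfl | hy2⟩
    · exact absurd hy hA
    · exact ⟨hy, hy2⟩
  · rintro ⟨h1, h2⟩
    exact ⟨h1, Or.inr h2⟩

lemma erase_inter_of_not_mem {A X : Finset I} {o : I} (hX : o ∉ X) :
    A.erase o ∩ X = A ∩ X := by
  ext y
  simp only [Finset.mem_inter, Finset.mem_erase]
  constructor
  · rintro ⟨⟨_, h1⟩, h2⟩
    exact ⟨h1, h2⟩
  · rintro ⟨h1, h2⟩
    exact ⟨⟨fun e => hX (e ▸ h2), h1⟩, h2⟩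

/-- Abel-type bound: if every `p1`-prefix of `A` is at most `s` larger than that of `G`,
with `u` decreasing along the list, then `∑ A ≤ ∑ G + s * v`. -/
lemma key (u : I → ℝ) :
    ∀ (l : List I) (A G : Finset I) (s : ℕ) (v : ℝ),
      l.Nodup → (∀ x ∈ l, 0 < u x) → l.Pairwise (fun a b => u b < u a) →
      (∀ x ∈ l, u x ≤ v) → 0 ≤ v →
      A ⊆ l.toFinset → G ⊆ l.toFinset →
      (∀ n, (A ∩ (l.take n).toFinset).card ≤ (G ∩ (l.take n).toFinset).card + s) →
      ∑ o ∈ A, u o ≤ ∑ o ∈ G, u o + s * v := by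
  intro l
  induction l with
  | nil =>
    intro A G s v _ _ _ _ hv hA hG _
    have hA0 : A = ∅ := Finset.subset_empty.1 (by simpa using hA)
    have hG0 : G = ∅ := Finset.subset_empty.1 (by simpa using hG)
    subst hA0; subst hG0
    simp
    positivity
  | cons o l ih =>
    intro A G s v hnd hpos hpw hub hv hA hG hdom
    obtain ⟨hol, hnd'⟩ : o ∉ l ∧ l.Nodup := by simpa [List.nodup_cons] using hnd
    obtain ⟨hpwo, hpw'⟩ := List.pairwise_cons.1 hpw
    have huo : 0 < u o := hpos o (by simp)
    have huov : u o ≤ v := hub o (by simp)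
    have hpos' : ∀ x ∈ l, 0 < u x := fun x hx => hpos x (List.mem_cons_of_mem _ hx)
    have hub' : ∀ x ∈ l, u x ≤ u o := fun x hx => le_of_lt (hpwo x hx)
    have hnotin : ∀ n, o ∉ (l.take n).toFinset := fun n h =>
      hol (List.mem_of_mem_take (List.mem_toFinset.1 h))
    have htake : ∀ n, ((o :: l).take (n + 1)).toFinset = insert o (l.take n).toFinset := by
      intro n
      rw [List.take_succ_cons, List.toFinset_cons]
    by_cases hoA : o ∈ A <;> by_cases hoG : o ∈ G
    · -- o in both
      have hdom' : ∀ n, ((A.erase o) ∩ (l.take n).toFinset).card ≤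
          ((G.erase o) ∩ (l.take n).toFinset).card + s := by
        intro n
        have h2 := hdom (n + 1)
        rw [htake n, inter_insert_card_mem hoA (hnotin n),
          inter_insert_card_mem hoG (hnotin n)] at h2
        rw [erase_inter_of_not_mem (hnotin n), erase_inter_of_not_mem (hnotin n)]
        omega
      have hAe : A.erase o ⊆ l.toFinset := by
        intro y hy
        obtain ⟨hy1, hy2⟩ := Finset.mem_erase.1 hy
        have := hA hy2
        simp only [List.toFinset_cons, Finset.mem_insert] at this
        tauto
      have hGe : G.erase o ⊆ l.toFinset := by
        intro y hy
        obtain ⟨hy1, hy2⟩ := Finset.mem_erase.1 hy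
        have := hG hy2
        simp only [List.toFinset_cons, Finset.mem_insert] at this
        tauto
      have hrec := ih (A.erase o) (G.erase o) s (u o) hnd' hpos' hpw' hub'
        (le_of_lt huo) hAe hGe hdom'
      have hsumA := Finset.add_sum_erase A u hoA
      have hsumG := Finset.add_sum_erase G u hoG
      have hsv : (s : ℝ) * u o ≤ s * v := by
        apply mul_le_mul_of_nonneg_left huov (by positivity)
      linarith
    · -- o in A only: needs slack
      have hs1 : 1 ≤ s := by
        have h2 := hdom 1
        rw [htake 0] at h2
        simp only [List.take_zero, List.toFinset_nil] at h2
        rw [inter_insert_card_mem hoA (by simp), inter_insert_of_not_mem hoG] at h2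
        simp at h2
        omega
      have hdom' : ∀ n, ((A.erase o) ∩ (l.take n).toFinset).card ≤
          (G ∩ (l.take n).toFinset).card + (s - 1) := by
        intro n
        have h2 := hdom (n + 1)
        rw [htake n, inter_insert_card_mem hoA (hnotin n),
          inter_insert_of_not_mem hoG] at h2
        rw [erase_inter_of_not_mem (hnotin n)]
        omega
      have hAe : A.erase o ⊆ l.toFinset := by
        intro y hy
        obtain ⟨hy1, hy2⟩ := Finset.mem_erase.1 hy
        have := hA hy2
        simp only [List.toFinset_cons, Finset.mem_insert] at this
        tauto
      have hGe : G ⊆ l.toFinset := by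
        intro y hy
        have := hG hy
        simp only [List.toFinset_cons, Finset.mem_insert] at this
        rcases this with rfl | h
        · exact absurd hy hoG
        · exact h
      have hrec := ih (A.erase o) G (s - 1) (u o) hnd' hpos' hpw' hub'
        (le_of_lt huo) hAe hGe hdom'
      have hsumA := Finset.add_sum_erase A u hoA
      have hcast : ((s - 1 : ℕ) : ℝ) = (s : ℝ) - 1 := by
        rw [Nat.cast_sub hs1]; norm_num
      have hsv : (s : ℝ) * u o ≤ s * v := by
        apply mul_le_mul_of_nonneg_left huov (by positivity)
      rw [hcast] at hrec
      nlinarith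
    · -- o in G only
      have hdom' : ∀ n, (A ∩ (l.take n).toFinset).card ≤
          ((G.erase o) ∩ (l.take n).toFinset).card + (s + 1) := by
        intro n
        have h2 := hdom (n + 1)
        rw [htake n, inter_insert_of_not_mem hoA,
          inter_insert_card_mem hoG (hnotin n)] at h2
        rw [erase_inter_of_not_mem (hnotin n)]
        omega
      have hAe : A ⊆ l.toFinset := by
        intro y hy
        have := hA hy
        simp only [List.toFinset_cons, Finset.mem_insert] at this
        rcases this with rfl | h
        · exact absurd hy hoA
        · exact h
      have hGe : G.erase o ⊆ l.toFinset := by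
        intro y hy
        obtain ⟨hy1, hy2⟩ := Finset.mem_erase.1 hy
        have := hG hy2
        simp only [List.toFinset_cons, Finset.mem_insert] at this
        tauto
      have hrec := ih A (G.erase o) (s + 1) (u o) hnd' hpos' hpw' hub'
        (le_of_lt huo) hAe hGe hdom'
      have hsumG := Finset.add_sum_erase G u hoG
      have hsv : (s : ℝ) * u o ≤ s * v := by
        apply mul_le_mul_of_nonneg_left huov (by positivity)
      push_cast at hrec
      nlinarith
    · -- o in neither
      have hdom' : ∀ n, (A ∩ (l.take n).toFinset).card ≤
          (G ∩ (l.take n).toFinset).card + s := by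
        intro n
        have h2 := hdom (n + 1)
        rw [htake n, inter_insert_of_not_mem hoA, inter_insert_of_not_mem hoG] at h2
        exact h2
      have hAe : A ⊆ l.toFinset := by
        intro y hy
        have := hA hy
        simp only [List.toFinset_cons, Finset.mem_insert] at this
        rcases this with rfl | h
        · exact absurd hy hoA
        · exact h
      have hGe : G ⊆ l.toFinset := by
        intro y hy
        have := hG hy
        simp only [List.toFinset_cons, Finset.mem_insert] at this
        rcases this with rfl | h
        · exact absurd hy hoG
        · exact h
      have hrec := ih A G s (u o) hnd' hpos' hpw' hub' (le_of_lt huo) hAe hGe hdom'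
      have hsv : (s : ℝ) * u o ≤ s * v := by
        apply mul_le_mul_of_nonneg_left huov (by positivity)
      linarith

/-- strict version: prefix dominance with equal cardinalities and `A ≠ G`
forces a strictly smaller utility. -/
lemma keystrict (u : I → ℝ) :
    ∀ (l : List I) (A G : Finset I),
      l.Nodup → (∀ x ∈ l, 0 < u x) → l.Pairwise (fun a b => u b < u a) →
      A ⊆ l.toFinset → G ⊆ l.toFinset →
      (∀ n, (A ∩ (l.take n).toFinset).card ≤ (G ∩ (l.take n).toFinset).card) →
      A ≠ G → A.card = G.card →
      ∑ o ∈ A, u o < ∑ o ∈ G, u o := by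
  intro l
  induction l with
  | nil =>
    intro A G _ _ _ hA hG _ hne _
    have hA0 : A = ∅ := Finset.subset_empty.1 (by simpa using hA)
    have hG0 : G = ∅ := Finset.subset_empty.1 (by simpa using hG)
    exact absurd (hA0.trans hG0.symm) hne
  | cons o l ih =>
    intro A G hnd hpos hpw hA hG hdom hne hcards
    obtain ⟨hol, hnd'⟩ : o ∉ l ∧ l.Nodup := by simpa [List.nodup_cons] using hnd
    obtain ⟨hpwo, hpw'⟩ := List.pairwise_cons.1 hpw
    have huo : 0 < u o := hpos o (by simp)
    have hpos' : ∀ x ∈ l, 0 < u x := fun x hx => hpos x (List.mem_cons_of_mem _ hx)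
    have hnotin : ∀ n, o ∉ (l.take n).toFinset := fun n h =>
      hol (List.mem_of_mem_take (List.mem_toFinset.1 h))
    have htake : ∀ n, ((o :: l).take (n + 1)).toFinset = insert o (l.take n).toFinset := by
      intro n
      rw [List.take_succ_cons, List.toFinset_cons]
    by_cases hoA : o ∈ A <;> by_cases hoG : o ∈ G
    · -- o in both: recurse
      have hdom' : ∀ n, ((A.erase o) ∩ (l.take n).toFinset).card ≤
          ((G.erase o) ∩ (l.take n).toFinset).card := by
        intro n
        have h2 := hdom (n + 1)
        rw [htake n, inter_insert_card_mem hoA (hnotin n),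
          inter_insert_card_mem hoG (hnotin n)] at h2
        rw [erase_inter_of_not_mem (hnotin n), erase_inter_of_not_mem (hnotin n)]
        omega
      have hAe : A.erase o ⊆ l.toFinset := by
        intro y hy
        obtain ⟨hy1, hy2⟩ := Finset.mem_erase.1 hy
        have := hA hy2
        simp only [List.toFinset_cons, Finset.mem_insert] at this
        tauto
      have hGe : G.erase o ⊆ l.toFinset := by
        intro y hy
        obtain ⟨hy1, hy2⟩ := Finset.mem_erase.1 hy
        have := hG hy2
        simp only [List.toFinset_cons, Finset.mem_insert] at this
        tauto
      have hne' : A.erase o ≠ G.erase o := by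
        intro h
        apply hne
        rw [← Finset.insert_erase hoA, ← Finset.insert_erase hoG, h]
      have hcards' : (A.erase o).card = (G.erase o).card := by
        rw [Finset.card_erase_of_mem hoA, Finset.card_erase_of_mem hoG, hcards]
      have hrec := ih (A.erase o) (G.erase o) hnd' hpos' hpw' hAe hGe hdom' hne' hcards'
      have hsumA := Finset.add_sum_erase A u hoA
      have hsumG := Finset.add_sum_erase G u hoG
      linarith
    · -- o in A only: impossible
      exfalso
      have h2 := hdom 1
      rw [htake 0] at h2
      simp only [List.take_zero, List.toFinset_nil] at h2
      rw [inter_insert_card_mem hoA (by simp), inter_insert_of_not_mem hoG] at h2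
      simp at h2
    · -- o in G only: terminal, use `key` with slack 1
      have hAe : A ⊆ l.toFinset := by
        intro y hy
        have := hA hy
        simp only [List.toFinset_cons, Finset.mem_insert] at this
        rcases this with rfl | h
        · exact absurd hy hoA
        · exact h
      have hGe : G.erase o ⊆ l.toFinset := by
        intro y hy
        obtain ⟨hy1, hy2⟩ := Finset.mem_erase.1 hy
        have := hG hy2
        simp only [List.toFinset_cons, Finset.mem_insert] at this
        tauto
      have hsumG := Finset.add_sum_erase G u hoG
      cases l with
      | nil =>
        exfalso
        have hA0 : A = ∅ := Finset.subset_empty.1 (by simpa using hAe)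
        have hG1 : 0 < G.card := Finset.card_pos.2 ⟨o, hoG⟩
        rw [hA0] at hcards
        simp at hcards
        omega
      | cons b l' =>
        have hub' : ∀ x ∈ b :: l', u x ≤ u b := by
          intro x hx
          rcases List.mem_cons.1 hx with rfl | hx
          · exact le_refl _
          · exact le_of_lt ((List.pairwise_cons.1 hpw').1 x hx)
        have hub0 : 0 ≤ u b := le_of_lt (hpos' b (by simp))
        have hdom' : ∀ n, (A ∩ ((b :: l').take n).toFinset).card ≤
            ((G.erase o) ∩ ((b :: l').take n).toFinset).card + 1 := by
          intro n
          have h2 := hdom (n + 1)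
          rw [htake n, inter_insert_of_not_mem hoA,
            inter_insert_card_mem hoG (hnotin n)] at h2
          rw [erase_inter_of_not_mem (hnotin n)]
          omega
        have hkey := key u (b :: l') A (G.erase o) 1 (u b) hnd' hpos' hpw'
          hub' hub0 hAe hGe hdom'
        have hbo : u b < u o := hpwo b (by simp)
        simp only [Nat.cast_one, one_mul] at hkey
        linarith
    · -- o in neither: recurse
      have hdom' : ∀ n, (A ∩ (l.take n).toFinset).card ≤
          (G ∩ (l.take n).toFinset).card := by
        intro n
        have h2 := hdom (n + 1)
        rw [htake n, inter_insert_of_not_mem hoA, inter_insert_of_not_mem hoG] at h2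
        exact h2
      have hAe : A ⊆ l.toFinset := by
        intro y hy
        have := hA hy
        simp only [List.toFinset_cons, Finset.mem_insert] at this
        rcases this with rfl | h
        · exact absurd hy hoA
        · exact h
      have hGe : G ⊆ l.toFinset := by
        intro y hy
        have := hG hy
        simp only [List.toFinset_cons, Finset.mem_insert] at this
        rcases this with rfl | h
        · exact absurd hy hoG
        · exact h
      exact ih A G hnd' hpos' hpw' hAe hGe hdom' hne hcards

/- ### final assembly -/

theorem main {I : Type*} [DecidableEq I]
    (O : Finset I) (π : List (Fin 2)) (hπ : π.length = O.card)
    (p2 : List I) (hp2 : IsReport O p2)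
    (p1 : List I) (hp1 : IsReport O p1) :
    ∀ u : I → ℝ, Consistent O p1 u →
      ∀ q : List I, IsReport O q →
        (∀ q' : List I, IsReport O q' →
          ∑ o ∈ alloc2 q' p2 π O 0, u o ≤ ∑ o ∈ alloc2 q p2 π O 0, u o) →
        alloc2 q p2 π O 0 = greedy (Achievable p2 π O) p1 ∅ := by
  intro u hu q hq hbest
  set P : Finset I → Prop := Achievable p2 π O with hP
  have hOp2 : ∀ x ∈ O, x ∈ p2 := fun x hx => (hp2.2 x).2 hx
  have hp1O : p1.toFinset = O := by
    ext x
    rw [List.mem_toFinset]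
    exact hp1.2 x
  have hPiff : ∀ S, P S ↔ CondRel p2 π O S := fun S =>
    achievable_iff O π hπ p2 hp2 S
  have hdc : ∀ S T : Finset I, T ⊆ S → P S → P T := by
    rintro S T hTS ⟨r, hr, hsub⟩
    exact ⟨r, hr, hTS.trans hsub⟩
  have haug : ∀ S T : Finset I, P S → P T → S.card < T.card →
      ∃ x ∈ T, x ∉ S ∧ P (insert x S) := by
    intro S T hS hT hc
    obtain ⟨x, hxT, hxS, hcond⟩ := cond_aug p2 π O S T ((hPiff S).1 hS) ((hPiff T).1 hT) hc
    exact ⟨x, hxT, hxS, (hPiff _).2 hcond⟩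
  set A : Finset I := alloc2 q p2 π O 0 with hA
  set G : Finset I := greedy P p1 ∅ with hG
  have hPA : P A := ⟨q, hq, Finset.Subset.refl _⟩
  have hPempty : P (∅ : Finset I) := ⟨p1, hp1, Finset.empty_subset _⟩
  have hmax0 : ∀ T : Finset I, P T → T ⊆ (∅ : Finset I) → T.card ≤ (∅ : Finset I).card :=
    fun T _ h => by simpa using Finset.card_le_card h
  have hmaxfull : ∀ T : Finset I, P T → T ⊆ O → T.card ≤ G.card := by
    intro T hPT hTO
    refine greedy_max P hdc haug p1 ∅ ∅ hPempty (Finset.Subset.refl _)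
      (fun x _ => Finset.notMem_empty x) hp1.1 hmax0 T hPT ?_
    rw [Finset.empty_union, hp1O]
    exact hTO
  have hPG : P G := greedy_pred P p1 ∅ hPempty
  have hGO : G ⊆ O := by
    have := greedy_subset P p1 ∅
    rw [Finset.empty_union, hp1O] at this
    exact this
  have hallocCard : ∀ q' : List I, IsReport O q' → (alloc2 q' p2 π O 0).card = zer π := by
    intro q' hq'
    exact seqAlloc_card p2 q' π O (fun x hx => (hq'.2 x).2 hx) hOp2 hπ
  have hallocO : ∀ q' : List I, alloc2 q' p2 π O 0 ⊆ O := by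
    intro q'
    exact seqAlloc_subset _ π O 0
  have hAcard : A.card = zer π := hallocCard q hq
  -- G is itself a full allocation
  obtain ⟨qg, hqg, hGsub⟩ := hPG
  have hPallocG : P (alloc2 qg p2 π O 0) := ⟨qg, hqg, Finset.Subset.refl _⟩
  have hallocGcard : (alloc2 qg p2 π O 0).card = zer π := hallocCard qg hqg
  have h1 : (alloc2 qg p2 π O 0).card ≤ G.card := hmaxfull _ hPallocG (hallocO qg)
  have hGeq : G = alloc2 qg p2 π O 0 :=
    Finset.eq_of_subset_of_card_le hGsub h1
  have hGcard : G.card = zer π := by rw [hGeq, hallocGcard]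
  -- prefix dominance
  have hdomAG : ∀ n, (A ∩ (p1.take n).toFinset).card ≤ (G ∩ (p1.take n).toFinset).card := by
    intro n
    set l1 : List I := p1.take n with hl1
    set l2 : List I := p1.drop n with hl2
    have htd : l1 ++ l2 = p1 := List.take_append_drop n p1
    have hnd12 : (l1 ++ l2).Nodup := by rw [htd]; exact hp1.1
    have hdisj : l1.Disjoint l2 := fun a ha hb => (List.nodup_append.1 hnd12).2.2 a ha a hb rfl
    set G1 : Finset I := greedy P l1 ∅ with hG1
    have hGsplit : G = greedy P l2 G1 := by
      rw [hG, ← htd, greedy_append]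
    have hG1sub : G1 ⊆ l1.toFinset := by
      have := greedy_subset P l1 ∅
      rwa [Finset.empty_union] at this
    have hG1G : G1 ⊆ G := by
      rw [hGsplit]
      exact subset_greedy P l2 G1
    have claim1 : G ∩ l1.toFinset = G1 := by
      apply Finset.Subset.antisymm
      · intro x hx
        obtain ⟨hxG, hxl1⟩ := Finset.mem_inter.1 hx
        have hx2 : x ∈ G1 ∪ l2.toFinset := by
          rw [hGsplit] at hxG
          exact greedy_subset P l2 G1 hxG
        rcases Finset.mem_union.1 hx2 with h | h
        · exact h
        · exact absurd (List.mem_toFinset.1 h)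
            (hdisj (List.mem_toFinset.1 hxl1))
      · intro x hx
        exact Finset.mem_inter.2 ⟨hG1G hx, hG1sub hx⟩
    have claim2 : (A ∩ l1.toFinset).card ≤ G1.card := by
      refine greedy_max P hdc haug l1 ∅ ∅ hPempty (Finset.Subset.refl _)
        (fun x _ => Finset.notMem_empty x) (hp1.1.sublist (List.take_sublist n p1))
        hmax0 (A ∩ l1.toFinset) (hdc A _ Finset.inter_subset_left hPA) ?_
      rw [Finset.empty_union]
      exact Finset.inter_subset_right
    rw [claim1]
    exact claim2
  have hupos : ∀ x ∈ p1, 0 < u x := fun x hx => hu.1 x ((hp1.2 x).1 hx)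
  have hpwu : p1.Pairwise fun a b => u b < u a := by
    have hidx := nodup_pairwise_indexOf p1 hp1.1
    rw [List.pairwise_iff_get] at hidx ⊢
    intro i j hij
    have h1 := hidx i j hij
    have hmi : p1.get i ∈ O := (hp1.2 _).1 (p1.get_mem _)
    have hmj : p1.get j ∈ O := (hp1.2 _).1 (p1.get_mem _)
    exact (hu.2 _ hmi _ hmj).2 h1
  by_contra hne
  have hcardEq : A.card = G.card := by rw [hAcard, hGcard]
  have hAp1 : A ⊆ p1.toFinset := by rw [hp1O]; exact hallocO q
  have hGp1 : G ⊆ p1.toFinset := by rw [hp1O]; exact hGO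
  have hlt := keystrict u p1 A G hp1.1 hupos hpwu hAp1 hGp1 hdomAG hne hcardEq
  have hb := hbest qg hqg
  rw [← hGeq] at hb
  exact absurd hb (by linarith)

end S6

/-- Let `S*` be the greedy set.  For every additive utility `u`
consistent with agent 1's true preference ≻₁ (the ranking list `p1`) and every
best response `q` of agent 1 with respect to `u`, agent 1's allocation under
`(q, p2)` equals `S*`.  In particular, for two agents all best responses yield
the same allocation for the manipulator, independent of the chosen consistent
utility. -/
theorem statement6 {I : Type*} [DecidableEq I]
    (O : Finset I) (π : List (Fin 2)) (hπ : π.length = O.card)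
    (p2 : List I) (hp2 : IsReport O p2)
    (p1 : List I) (hp1 : IsReport O p1)  -- agent 1's true preference ≻₁
    :
    ∀ u : I → ℝ, Consistent O p1 u →
      ∀ q : List I, IsReport O q →
        (∀ q' : List I, IsReport O q' →
          ∑ o ∈ alloc2 q' p2 π O 0, u o ≤ ∑ o ∈ alloc2 q p2 π O 0, u o) →
        alloc2 q p2 π O 0 = greedy (Achievable p2 π O) p1 ∅ :=
  S6.main O π hπ p2 hp2 p1 hp1
end
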